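/- arXiv:1707.07130 — 7 statements merged into one kernel-verified Lean document; each statement's English description precedes it below -/
import Mathlib

section
/- For every ordinal α, the (α+1)-bicyclic monoid B_{α+1} is isomorphic as a monoid to the Bruck extension B(B_α) of the α-bicyclic monoid B_α. Concretely, the map f : B_{α+1} → B(B_α) defined by f((a,b)) = (n₁, (a*, b*), m₁), where a = n₁ω^α + a* and b = m₁ω^α + b* are the unique decompositions with n₁, m₁ non-negative integers and a*, b* < ω^α, is a semigroup isomorphism. -/
open Ordinal Set Topology

noncomputable section

/-- The `α`-bicyclic monoid: pairs of ordinals below `ω ^ α`. -/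
def Bicyclic (α : Ordinal) : Type 1 :=
  {p : Ordinal × Ordinal // p.1 < ω ^ α ∧ p.2 < ω ^ α}

namespace Bicyclic

variable {α : Ordinal}

def mk (a b : Ordinal) (ha : a < ω ^ α) (hb : b < ω ^ α) : Bicyclic α :=
  ⟨(a, b), ha, hb⟩

instance : Mul (Bicyclic α) :=
  ⟨fun x y =>
    if x.val.2 ≤ y.val.1 then
      ⟨(x.val.1 + (y.val.1 - x.val.2), y.val.2),
        (principal_add_omega0_opow α) x.2.1
          (lt_of_le_of_lt (Ordinal.sub_le_self _ _) y.2.1),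
        y.2.2⟩
    else
      ⟨(x.val.1, y.val.2 + (x.val.2 - y.val.1)),
        x.2.1,
        (principal_add_omega0_opow α) y.2.2
          (lt_of_le_of_lt (Ordinal.sub_le_self _ _) x.2.2)⟩⟩

instance : One (Bicyclic α) :=
  ⟨⟨(0, 0), opow_pos α omega0_pos, opow_pos α omega0_pos⟩⟩

end Bicyclic

/-- The Bruck extension of a semigroup `S`. -/
def Bruck (S : Type*) : Type _ := ℕ × S × ℕ

def Bruck.mk {S : Type*} (n : ℕ) (s : S) (m : ℕ) : Bruck S := (n, s, m)

instance {S : Type*} [Mul S] : Mul (Bruck S) :=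
  ⟨fun x y =>
    if x.2.2 < y.1 then (x.1 + y.1 - x.2.2, y.2.1, y.2.2)
    else if y.1 < x.2.2 then (x.1, x.2.1, y.2.2 + x.2.2 - y.1)
    else (x.1, x.2.1 * y.2.1, y.2.2)⟩


namespace BicyclicBruckAux

variable {α : Ordinal}

lemma hp : (ω : Ordinal) ^ α ≠ 0 := (opow_pos α omega0_pos).ne'

lemma bmul_val (x y : Bicyclic α) :
    (x * y).val = if x.val.2 ≤ y.val.1 then (x.val.1 + (y.val.1 - x.val.2), y.val.2)
      else (x.val.1, y.val.2 + (x.val.2 - y.val.1)) := by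
  show (if _ ≤ _ then (⟨_, _⟩ : Bicyclic α) else ⟨_, _⟩).val = _
  rw [apply_ite Subtype.val]

lemma brmul_mk {S : Type*} [Mul S] (n m k l : ℕ) (x y : S) :
    (@HMul.hMul (Bruck S) (Bruck S) (Bruck S) instHMul (n, x, m) (k, y, l)) =
      if m < k then ((n + k - m, y, l) : Bruck S)
      else if k < m then ((n, x, l + m - k) : Bruck S)
      else ((n, x * y, l) : Bruck S) := rfl

lemma decomp_lt (n : ℕ) {a : Ordinal} (ha : a < ω ^ α) :
    ω ^ α * n + a < ω ^ (α + 1) := by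
  rw [opow_add, opow_one]
  calc ω ^ α * n + a < ω ^ α * n + ω ^ α := add_lt_add_right ha _
    _ = ω ^ α * (n + 1 : ℕ) := by push_cast; rw [mul_add, mul_one]
    _ ≤ ω ^ α * ω := mul_le_mul_right (nat_lt_omega0 (n + 1)).le _

lemma decomp_div (n : ℕ) {a : Ordinal} (ha : a < ω ^ α) :
    (ω ^ α * n + a) / ω ^ α = n := by
  rw [Ordinal.mul_add_div _ hp, Ordinal.div_eq_zero_of_lt ha, add_zero]

lemma decomp_mod (n : ℕ) {a : Ordinal} (ha : a < ω ^ α) :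
    (ω ^ α * n + a) % ω ^ α = a := by
  rw [Ordinal.mul_add_mod_self, Ordinal.mod_eq_of_lt ha]

lemma onat_eq {x : Ordinal} (h : x < ω) : ((x.card.toNat : ℕ) : Ordinal) = x := by
  obtain ⟨n, rfl⟩ := lt_omega0.1 h
  simp

lemma absorb {b : Ordinal} (hb : b < ω ^ α) {n : ℕ} (hn : 0 < n) :
    b + ω ^ α * n = ω ^ α * n := by
  refine add_absorp hb ?_
  calc ω ^ α = ω ^ α * 1 := (mul_one _).symm
    _ ≤ ω ^ α * n := mul_le_mul_right (by exact_mod_cast hn) _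

lemma sub_lt' {m k : ℕ} (h : m < k) {b : Ordinal} (hb : b < ω ^ α) (c : Ordinal) :
    (ω ^ α * k + c) - (ω ^ α * m + b) = ω ^ α * (k - m : ℕ) + c := by
  have key : (ω ^ α * m + b) + (ω ^ α * (k - m : ℕ) + c) = ω ^ α * k + c := by
    rw [← add_assoc, add_assoc (ω ^ α * (m : ℕ)) b, absorb hb (Nat.sub_pos_of_lt h),
      ← mul_add]
    congr 2
    rw [← Nat.cast_add, Nat.add_sub_cancel' h.le]
  rw [← key, Ordinal.add_sub_cancel]

lemma sub_eq' {k : ℕ} {b c : Ordinal} (hbc : b ≤ c) :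
    (ω ^ α * k + c) - (ω ^ α * k + b) = c - b := by
  have key : (ω ^ α * k + b) + (c - b) = ω ^ α * k + c := by
    rw [add_assoc, Ordinal.add_sub_cancel_of_le hbc]
  rw [← key, Ordinal.add_sub_cancel]

lemma lt_of_nat_lt {m k : ℕ} (h : m < k) {b : Ordinal} (hb : b < ω ^ α) (c : Ordinal) :
    ω ^ α * m + b < ω ^ α * k + c := by
  calc ω ^ α * m + b < ω ^ α * m + ω ^ α := add_lt_add_right hb _
    _ = ω ^ α * (m + 1 : ℕ) := by push_cast; rw [mul_add, mul_one]
    _ ≤ ω ^ α * k := mul_le_mul_right (by exact_mod_cast h) _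
    _ ≤ ω ^ α * k + c := le_add_right le_rfl

def f (x : Bicyclic (α + 1)) : Bruck (Bicyclic α) :=
  ((x.val.1 / ω ^ α).card.toNat,
    ⟨(x.val.1 % ω ^ α, x.val.2 % ω ^ α), Ordinal.mod_lt _ hp, Ordinal.mod_lt _ hp⟩,
    (x.val.2 / ω ^ α).card.toNat)

def g (s : Bruck (Bicyclic α)) : Bicyclic (α + 1) :=
  ⟨(ω ^ α * s.1 + s.2.1.val.1, ω ^ α * s.2.2 + s.2.1.val.2),
    decomp_lt _ s.2.1.2.1, decomp_lt _ s.2.1.2.2⟩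

lemma f_g (s : Bruck (Bicyclic α)) : f (g s) = s := by
  obtain ⟨n, ⟨⟨a, b⟩, ha, hb⟩, m⟩ := s
  simp only [f, g, decomp_div n ha, decomp_div m hb, decomp_mod n ha, decomp_mod m hb]
  simp
  rfl

lemma g_f (x : Bicyclic (α + 1)) : g (f x) = x := by
  obtain ⟨⟨a, b⟩, ha, hb⟩ := x
  have hω : (ω : Ordinal) ^ (α + 1) = ω ^ α * ω := by rw [opow_add, opow_one]
  have ha' : a / ω ^ α < ω := (Ordinal.div_lt hp).2 (hω ▸ ha)
  have hb' : b / ω ^ α < ω := (Ordinal.div_lt hp).2 (hω ▸ hb)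
  apply Subtype.ext
  simp only [f, g]
  rw [onat_eq ha', onat_eq hb', Ordinal.div_add_mod, Ordinal.div_add_mod]

lemma g_mul (s t : Bruck (Bicyclic α)) : g (s * t) = g s * g t := by
  obtain ⟨n, ⟨⟨a, b⟩, ha, hb⟩, m⟩ := s
  obtain ⟨k, ⟨⟨c, d⟩, hc, hd⟩, l⟩ := t
  erw [brmul_mk]
  rcases Nat.lt_trichotomy m k with hmk | hmk | hmk
  · have hle : ω ^ α * m + b ≤ ω ^ α * k + c := (lt_of_nat_lt hmk hb c).le
    rw [if_pos hmk]
    apply Subtype.ext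
    rw [bmul_val]
    simp only [g]
    erw [if_pos hle]
    refine Prod.ext ?_ rfl
    show ω ^ α * (n + k - m : ℕ) + c
        = ω ^ α * n + a + ((ω ^ α * k + c) - (ω ^ α * m + b))
    rw [sub_lt' hmk hb, ← add_assoc, add_assoc (ω ^ α * (n : ℕ)) a,
      absorb ha (Nat.sub_pos_of_lt hmk), ← mul_add]
    congr 2
    rw [← Nat.cast_add, Nat.add_sub_assoc hmk.le]
  · subst hmk
    rw [if_neg (lt_irrefl m), if_neg (lt_irrefl m)]
    apply Subtype.ext
    rw [bmul_val]
    simp only [g]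
    erw [bmul_val]
    rcases le_or_gt b c with hbc | hbc
    · have hle : ω ^ α * m + b ≤ ω ^ α * m + c := add_le_add_right hbc _
      erw [if_pos hbc, if_pos hle]
      refine Prod.ext ?_ rfl
      show ω ^ α * n + (a + (c - b))
          = ω ^ α * n + a + ((ω ^ α * m + c) - (ω ^ α * m + b))
      rw [sub_eq' hbc, add_assoc]
    · have hle : ¬ ω ^ α * m + b ≤ ω ^ α * m + c := by
        rw [not_le]; exact add_lt_add_right hbc _
      erw [if_neg (not_le.2 hbc), if_neg hle]
      refine Prod.ext rfl ?_
      show ω ^ α * l + (d + (b - c))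
          = ω ^ α * l + d + ((ω ^ α * m + b) - (ω ^ α * m + c))
      rw [sub_eq' hbc.le, add_assoc]
  · have hle : ¬ ω ^ α * m + b ≤ ω ^ α * k + c := not_le.2 (lt_of_nat_lt hmk hc b)
    rw [if_neg (Nat.lt_asymm hmk), if_pos hmk]
    apply Subtype.ext
    rw [bmul_val]
    simp only [g]
    erw [if_neg hle]
    refine Prod.ext rfl ?_
    show ω ^ α * (l + m - k : ℕ) + b
        = ω ^ α * l + d + ((ω ^ α * m + b) - (ω ^ α * k + c))
    rw [sub_lt' hmk hc, ← add_assoc, add_assoc (ω ^ α * (l : ℕ)) d,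
      absorb hd (Nat.sub_pos_of_lt hmk), ← mul_add]
    congr 2
    rw [← Nat.cast_add, Nat.add_sub_assoc hmk.le]

end BicyclicBruckAux

/-- The Bruck extension of `S` with an adjoined (absorbing) zero `0*`. -/
abbrev BruckZero (S : Type*) := WithZero (Bruck S)

/-- The box `[n,m]` in the Bruck extension with zero. -/
def box (S : Type*) (n m : ℕ) : Set (BruckZero S) :=
  {x | ∃ s : S, x = ↑(Bruck.mk n s m)}

/-- A topology on `X` is shift-continuous if all two-sided shifts `x ↦ a * x * b`
are continuous. -/
def ShiftContinuous (X : Type*) [Mul X] [TopologicalSpace X] : Prop :=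
  ∀ a b : X, Continuous fun x => a * x * b

/-- For every ordinal `α`, the `(α+1)`-bicyclic monoid is isomorphic (as a
magma/semigroup) to the Bruck extension of the `α`-bicyclic monoid, via the map sending
`(ω^α * n₁ + a*, ω^α * m₁ + b*)` (with `a*, b* < ω^α`) to `(n₁, (a*, b*), m₁)`. -/
theorem bicyclic_succ_isomorphic_bruck (α : Ordinal) :
    ∃ f : Bicyclic (α + 1) ≃* Bruck (Bicyclic α),
      ∀ (x : Bicyclic (α + 1)) (n₁ m₁ : ℕ) (a' b' : Ordinal)
        (ha' : a' < ω ^ α) (hb' : b' < ω ^ α),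
        x.val.1 = ω ^ α * n₁ + a' → x.val.2 = ω ^ α * m₁ + b' →
        f x = Bruck.mk n₁ (Bicyclic.mk a' b' ha' hb') m₁ := by
  refine ⟨MulEquiv.mk (Equiv.mk BicyclicBruckAux.f BicyclicBruckAux.g
    BicyclicBruckAux.g_f BicyclicBruckAux.f_g) ?_, ?_⟩
  · intro x y
    have h : x * y = BicyclicBruckAux.g (BicyclicBruckAux.f x * BicyclicBruckAux.f y) := by
      rw [BicyclicBruckAux.g_mul, BicyclicBruckAux.g_f, BicyclicBruckAux.g_f]
    show BicyclicBruckAux.f (x * y) = BicyclicBruckAux.f x * BicyclicBruckAux.f y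
    rw [h, BicyclicBruckAux.f_g]
  · intro x n₁ m₁ a' b' ha' hb' h1 h2
    show BicyclicBruckAux.f x = _
    refine Prod.ext ?_ (Prod.ext ?_ ?_)
    · show Cardinal.toNat ((x.val.1 / ω ^ α).card) = n₁
      rw [h1, BicyclicBruckAux.decomp_div n₁ ha']; simp
    · apply Subtype.ext
      show ((x.val.1 % ω ^ α, x.val.2 % ω ^ α) : Ordinal × Ordinal) = (a', b')
      rw [h1, h2, BicyclicBruckAux.decomp_mod n₁ ha', BicyclicBruckAux.decomp_mod m₁ hb']
    · show Cardinal.toNat ((x.val.2 / ω ^ α).card) = m₁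
      rw [h2, BicyclicBruckAux.decomp_div m₁ hb']; simp
end
end

section
/- Let α be an ordinal, let τ be a Hausdorff shift-continuous topology on the α-bicyclic monoid B_α, and let (a,b) ∈ B_α with a and b nonzero, with Cantor normal forms a = a₁ω^{n₁}+⋯+a_mω^{n_m} and b = b₁ω^{k₁}+⋯+b_tω^{k_t}. Then the set V_{(a,b)} = {(a,b)} ∪ {(a₁ω^{n₁}+⋯+(a_m−1)ω^{n_m}+δ, b₁ω^{k₁}+⋯+(b_t−1)ω^{k_t}+β) : δ < ω^{n_m} and β < ω^{k_t}} is a neighborhood of the point (a,b) in the topology τ. -/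
open Ordinal Set Topology

noncomputable section

namespace Bicyclic

variable {α : Ordinal}

lemma one_val : (1 : Bicyclic α).val = (0, 0) := rfl

lemma mul_val_of_le {x y : Bicyclic α} (h : x.val.2 ≤ y.val.1) :
    (x * y).val = (x.val.1 + (y.val.1 - x.val.2), y.val.2) :=
  congrArg Subtype.val (if_pos h)

lemma mul_val_of_gt {x y : Bicyclic α} (h : ¬ x.val.2 ≤ y.val.1) :
    (x * y).val = (x.val.1, y.val.2 + (x.val.2 - y.val.1)) :=
  congrArg Subtype.val (if_neg h)

lemma mul_one' (z : Bicyclic α) : z * 1 = z := by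
  apply Subtype.ext
  by_cases h : z.val.2 ≤ (1 : Bicyclic α).val.1
  · rw [mul_val_of_le h]
    have h2 : z.val.2 = 0 := le_antisymm h (zero_le)
    rw [one_val] at h ⊢
    simp only [Ordinal.zero_sub, add_zero]
    exact Prod.ext rfl h2.symm
  · rw [mul_val_of_gt h, one_val]
    simp only [Ordinal.sub_zero, zero_add]

lemma one_mul' (z : Bicyclic α) : 1 * z = z := by
  apply Subtype.ext
  have h : (1 : Bicyclic α).val.2 ≤ z.val.1 := zero_le
  rw [mul_val_of_le h, one_val]
  simp only [Ordinal.sub_zero, zero_add]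

end Bicyclic

namespace Bicyclic

variable {α : Ordinal}

lemma cont_left [TopologicalSpace (Bicyclic α)] (hτ : ShiftContinuous (Bicyclic α))
    (u : Bicyclic α) : Continuous fun t : Bicyclic α => u * t := by
  simpa only [mul_one'] using hτ u 1

lemma cont_right [TopologicalSpace (Bicyclic α)] (hτ : ShiftContinuous (Bicyclic α))
    (v : Bicyclic α) : Continuous fun t : Bicyclic α => t * v := by
  simpa only [one_mul'] using hτ 1 v

lemma left_absorb (h1 : (1 : Ordinal) < ω ^ α) {z : Bicyclic α} (hz : z.val.1 ≠ 0) :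
    (mk 1 1 h1 h1) * z = z := by
  apply Subtype.ext
  have hle : (mk 1 1 h1 h1 : Bicyclic α).val.2 ≤ z.val.1 := Ordinal.one_le_iff_ne_zero.2 hz
  rw [mul_val_of_le hle]
  exact Prod.ext (Ordinal.add_sub_cancel_of_le (Ordinal.one_le_iff_ne_zero.2 hz)) rfl

lemma right_absorb (h1 : (1 : Ordinal) < ω ^ α) {z : Bicyclic α} (hz : z.val.2 ≠ 0) :
    z * (mk 1 1 h1 h1) = z := by
  apply Subtype.ext
  rcases eq_or_lt_of_le (Ordinal.one_le_iff_ne_zero.2 hz) with h | h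
  · rw [mul_val_of_le (show z.val.2 ≤ (mk 1 1 h1 h1 : Bicyclic α).val.1 from h.ge)]
    show (z.val.1 + (1 - z.val.2), (1:Ordinal)) = z.val
    rw [← h, Ordinal.sub_self, add_zero]
    exact Prod.ext rfl h
  · rw [mul_val_of_gt (show ¬ z.val.2 ≤ (mk 1 1 h1 h1 : Bicyclic α).val.1 from not_le.2 h)]
    show ((z.val.1 : Ordinal), 1 + (z.val.2 - 1)) = z.val
    rw [Ordinal.add_sub_cancel_of_le h.le]

/-- Key lemma: the `1`-fiber of any continuous map sending `x` to `1` is a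
neighborhood of `x`. -/
lemma fiber_mem_nhds [TopologicalSpace (Bicyclic α)] [T2Space (Bicyclic α)]
    (hτ : ShiftContinuous (Bicyclic α)) (h1 : (1 : Ordinal) < ω ^ α)
    {x : Bicyclic α} {h : Bicyclic α → Bicyclic α} (hc : Continuous h) (hx : h x = 1) :
    h ⁻¹' {1} ∈ nhds x := by
  have hφ : Continuous fun t => (mk 1 1 h1 h1 : Bicyclic α) * h t :=
    (cont_left hτ _).comp hc
  have hψ : Continuous fun t => h t * (mk 1 1 h1 h1 : Bicyclic α) :=
    (cont_right hτ _).comp hc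
  have hne : (mk 1 1 h1 h1 : Bicyclic α) ≠ 1 := by
    intro hcon
    have h2 := congrArg (fun z : Bicyclic α => z.val.1) hcon
    exact one_ne_zero h2
  obtain ⟨U, W, hU, hW, heU, h1W, hdisj⟩ := t2_separation hne
  have hopen : IsOpen ((fun t => (mk 1 1 h1 h1 : Bicyclic α) * h t) ⁻¹' U ∩
      ((fun t => h t * (mk 1 1 h1 h1 : Bicyclic α)) ⁻¹' U ∩ h ⁻¹' W)) :=
    (hφ.isOpen_preimage U hU).inter ((hψ.isOpen_preimage U hU).inter (hc.isOpen_preimage W hW))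
  have hmem : x ∈ (fun t => (mk 1 1 h1 h1 : Bicyclic α) * h t) ⁻¹' U ∩
      ((fun t => h t * (mk 1 1 h1 h1 : Bicyclic α)) ⁻¹' U ∩ h ⁻¹' W) := by
    refine ⟨?_, ?_, ?_⟩
    · show (mk 1 1 h1 h1 : Bicyclic α) * h x ∈ U
      rw [hx, mul_one']; exact heU
    · show h x * (mk 1 1 h1 h1 : Bicyclic α) ∈ U
      rw [hx, one_mul']; exact heU
    · show h x ∈ W
      rw [hx]; exact h1W
  refine Filter.mem_of_superset (hopen.mem_nhds hmem) ?_
  rintro y ⟨hy1, hy2, hy3⟩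
  have hyne1 : (mk 1 1 h1 h1 : Bicyclic α) * h y ≠ h y := by
    intro hcon
    apply Set.disjoint_left.1 hdisj hy1
    show (mk 1 1 h1 h1 : Bicyclic α) * h y ∈ W
    rw [hcon]; exact hy3
  have hyne2 : h y * (mk 1 1 h1 h1 : Bicyclic α) ≠ h y := by
    intro hcon
    apply Set.disjoint_left.1 hdisj hy2
    show h y * (mk 1 1 h1 h1 : Bicyclic α) ∈ W
    rw [hcon]; exact hy3
  have hz1 : (h y).val.1 = 0 := by
    by_contra hc1
    exact hyne1 (left_absorb h1 hc1)
  have hz2 : (h y).val.2 = 0 := by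
    by_contra hc2
    exact hyne2 (right_absorb h1 hc2)
  show h y ∈ ({1} : Set (Bicyclic α))
  exact Subtype.ext (Prod.ext hz1 hz2)

end Bicyclic

section OrdAux

lemma abs1 {ρ e k : Ordinal} (hρ : ρ < ω ^ e) (hk : 0 < k) : ρ + ω ^ e * k = ω ^ e * k :=
  Ordinal.add_absorp hρ (le_mul_left _ hk)

lemma SL {e q c : Ordinal} (h : c < ω ^ e * q) : ∃ k, 0 < k ∧ c + ω ^ e * k = ω ^ e * q := by
  set A := ω ^ e with hA
  have hA0 : A ≠ 0 := (opow_pos e omega0_pos).ne'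
  have hdm := Ordinal.div_add_mod c A
  have hjq : c / A < q := by
    by_contra hc
    push_neg at hc
    exact absurd (lt_of_le_of_lt (Ordinal.mul_div_le c A) h)
      (not_lt.2 (mul_le_mul_right hc A))
  have hkpos : 0 < q - c / A := by
    rw [pos_iff_ne_zero]
    intro h0
    exact absurd (Ordinal.sub_eq_zero_iff_le.1 h0) (not_le.2 hjq)
  refine ⟨q - c / A, hkpos, ?_⟩
  calc c + A * (q - c / A) = A * (c / A) + (c % A + A * (q - c / A)) := by
        rw [← add_assoc, hdm]
    _ = A * (c / A) + A * (q - c / A) := by rw [abs1 (Ordinal.mod_lt c hA0) hkpos]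
    _ = A * (c / A + (q - c / A)) := (mul_add _ _ _).symm
    _ = A * q := by rw [Ordinal.add_sub_cancel_of_le hjq.le]

lemma div_abs {e k d : Ordinal} (hk : 0 < k) : ∃ μ, d + ω ^ e * k = ω ^ e * μ := by
  set A := ω ^ e with hA
  have hA0 : A ≠ 0 := (opow_pos e omega0_pos).ne'
  refine ⟨d / A + k, ?_⟩
  calc d + A * k = A * (d / A) + (d % A + A * k) := by rw [← add_assoc, Ordinal.div_add_mod]
    _ = A * (d / A) + A * k := by rw [abs1 (Ordinal.mod_lt d hA0) hk]
    _ = A * (d / A + k) := (mul_add _ _ _).symm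

lemma UQ {e b ζ₁ ζ₂ : Ordinal} (d₁ : ∃ μ, ζ₁ = ω ^ e * μ) (d₂ : ∃ μ, ζ₂ = ω ^ e * μ)
    (h₁ : ζ₁ + ω ^ e = b) (h₂ : ζ₂ + ω ^ e = b) : ζ₁ = ζ₂ := by
  have key : ∀ ξ₁ ξ₂ : Ordinal, (∃ μ, ξ₁ = ω ^ e * μ) → (∃ μ, ξ₂ = ω ^ e * μ) →
      ξ₁ + ω ^ e = b → ξ₂ + ω ^ e = b → ξ₁ < ξ₂ → False := by
    rintro ξ₁ ξ₂ ⟨μ₁, rfl⟩ ⟨μ₂, rfl⟩ e₁ e₂ hlt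
    have hμ : μ₁ < μ₂ := by
      by_contra hc
      push_neg at hc
      exact absurd (mul_le_mul_right hc (ω ^ e)) (not_le.2 hlt)
    have hsucc : μ₁ + 1 ≤ μ₂ := by
      rw [Ordinal.add_one_eq_succ]; exact Order.succ_le_iff.2 hμ
    have hle : b ≤ ω ^ e * μ₂ := by
      rw [← e₁]
      calc ω ^ e * μ₁ + ω ^ e = ω ^ e * (μ₁ + 1) := by rw [mul_add, mul_one]
        _ ≤ ω ^ e * μ₂ := mul_le_mul_right hsucc _
    have hb2 : ω ^ e * μ₂ < b := by
      rw [← e₂]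
      simpa using (add_lt_add_iff_left (ω ^ e * μ₂)).2 (opow_pos e omega0_pos)
    exact absurd hle (not_le.2 hb2)
  rcases lt_trichotomy ζ₁ ζ₂ with h | h | h
  · exact (key _ _ d₁ d₂ h₁ h₂ h).elim
  · exact h
  · exact (key _ _ d₂ d₁ h₂ h₁ h).elim

end OrdAux

open Bicyclic in
/-- Let `τ` be a Hausdorff shift-continuous topology on `B_α` and let
`(a,b) ∈ B_α` with `a, b ≠ 0`.  Writing the Cantor normal forms
`a = a₁ω^{n₁} + ⋯ + a_mω^{n_m}` and `b = b₁ω^{k₁} + ⋯ + b_tω^{k_t}`, set `e = n_m`,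
`f = k_t`, `a' = a₁ω^{n₁} + ⋯ + (a_m - 1)ω^{n_m}` and
`b' = b₁ω^{k₁} + ⋯ + (b_t - 1)ω^{k_t}`.  (The data `(a', e)` arising this way from the
Cantor normal form of a nonzero ordinal `a` is characterized by: `a = a' + ω^e` and
`a'` is a multiple of `ω^e`; similarly for `(b', f)`.)  Then the set
`V = {(a,b)} ∪ {(a' + δ, b' + β) : δ < ω^e, β < ω^f}` is a neighborhood of `(a,b)`. -/
theorem neighborhood_of_point (α : Ordinal) [TopologicalSpace (Bicyclic α)]
    [T2Space (Bicyclic α)] (hτ : ShiftContinuous (Bicyclic α))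
    (x : Bicyclic α) (ha : x.val.1 ≠ 0) (hb : x.val.2 ≠ 0)
    (e f a' b' : Ordinal)
    (hamul : ∃ q, a' = ω ^ e * q) (haeq : x.val.1 = a' + ω ^ e)
    (hbmul : ∃ q, b' = ω ^ f * q) (hbeq : x.val.2 = b' + ω ^ f) :
    ({x} ∪ {y : Bicyclic α | ∃ δ β : Ordinal, δ < ω ^ e ∧ β < ω ^ f ∧
        y.val = (a' + δ, b' + β)} : Set (Bicyclic α)) ∈ nhds x := by
  obtain ⟨q₀, ha'⟩ := hamul
  obtain ⟨r₀, hb'⟩ := hbmul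
  have hωα : (0 : Ordinal) < ω ^ α := opow_pos α omega0_pos
  have hba : x.val.1 < ω ^ α := x.2.1
  have hbb : x.val.2 < ω ^ α := x.2.2
  have h1α : (1 : Ordinal) < ω ^ α := lt_of_le_of_lt (Ordinal.one_le_iff_ne_zero.2 ha) hba
  have hA0 : (0 : Ordinal) < ω ^ e := opow_pos e omega0_pos
  have hB0 : (0 : Ordinal) < ω ^ f := opow_pos f omega0_pos
  have ha'le : a' ≤ x.val.1 := by rw [haeq]; exact le_self_add
  have hb'le : b' ≤ x.val.2 := by rw [hbeq]; exact le_self_add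
  have ha'α : a' < ω ^ α := lt_of_le_of_lt ha'le hba
  have hb'α : b' < ω ^ α := lt_of_le_of_lt hb'le hbb
  have haa' : x.val.1 - a' = ω ^ e := by rw [haeq, Ordinal.add_sub_cancel]
  have hbb' : x.val.2 - b' = ω ^ f := by rw [hbeq, Ordinal.add_sub_cancel]
  have hb'ltb : b' < x.val.2 := by
    rw [hbeq]; simpa using (add_lt_add_iff_left b').2 hB0
  -- the maps
  have hx1 : (mk 0 x.val.1 hωα hba : Bicyclic α) * x * (mk x.val.2 0 hbb hωα) = 1 := by
    apply Subtype.ext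
    have e1 : ((mk 0 x.val.1 hωα hba : Bicyclic α) * x).val = (0, x.val.2) := by
      rw [mul_val_of_le (show (mk 0 x.val.1 hωα hba : Bicyclic α).val.2 ≤ x.val.1 from le_rfl)]
      show (0 + (x.val.1 - x.val.1), x.val.2) = _
      rw [Ordinal.sub_self, add_zero]
    rw [mul_val_of_le (show ((mk 0 x.val.1 hωα hba : Bicyclic α) * x).val.2 ≤
        (mk x.val.2 0 hbb hωα : Bicyclic α).val.1 from by rw [e1]; exact le_rfl)]
    rw [e1, one_val]
    show (0 + (x.val.2 - x.val.2), (0:Ordinal)) = (0, 0)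
    rw [Ordinal.sub_self, add_zero]
  -- fiber characterization
  have fib : ∀ y : Bicyclic α,
      (mk 0 x.val.1 hωα hba : Bicyclic α) * y * (mk x.val.2 0 hbb hωα) = 1 →
      y = x ∨ (y.val.1 < x.val.1 ∧ y.val.2 + (x.val.1 - y.val.1) = x.val.2) := by
    intro y hy
    have hyval := congrArg Subtype.val hy
    rw [one_val] at hyval
    by_cases hc : x.val.1 ≤ y.val.1
    · left
      have e1 : ((mk 0 x.val.1 hωα hba : Bicyclic α) * y).val =
          (y.val.1 - x.val.1, y.val.2) := by
        rw [mul_val_of_le (show (mk 0 x.val.1 hωα hba : Bicyclic α).val.2 ≤ y.val.1 from hc)]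
        show (0 + (y.val.1 - x.val.1), y.val.2) = _
        rw [zero_add]
      by_cases hd : y.val.2 ≤ x.val.2
      · rw [mul_val_of_le (show ((mk 0 x.val.1 hωα hba : Bicyclic α) * y).val.2 ≤
            (mk x.val.2 0 hbb hωα : Bicyclic α).val.1 from by rw [e1]; exact hd), e1] at hyval
        dsimp only [mk] at hyval
        have h1 := (Prod.ext_iff.1 hyval).1
        have h2 : (y.val.1 - x.val.1) = 0 ∧ (x.val.2 - y.val.2) = 0 :=
          Ordinal.add_eq_zero_iff.1 h1
        have hc1 : y.val.1 = x.val.1 :=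
          le_antisymm (Ordinal.sub_eq_zero_iff_le.1 h2.1) hc
        have hc2 : y.val.2 = x.val.2 :=
          le_antisymm hd (Ordinal.sub_eq_zero_iff_le.1 h2.2)
        apply Subtype.ext
        rw [← Prod.mk.eta (p := y.val), ← Prod.mk.eta (p := x.val), hc1, hc2]
      · rw [mul_val_of_gt (show ¬ ((mk 0 x.val.1 hωα hba : Bicyclic α) * y).val.2 ≤
            (mk x.val.2 0 hbb hωα : Bicyclic α).val.1 from by rw [e1]; exact hd), e1] at hyval
        dsimp only [mk] at hyval
        have h2 := (Prod.ext_iff.1 hyval).2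
        rw [zero_add] at h2
        exact absurd (Ordinal.sub_eq_zero_iff_le.1 h2) hd
    · right
      have e1 : ((mk 0 x.val.1 hωα hba : Bicyclic α) * y).val =
          (0, y.val.2 + (x.val.1 - y.val.1)) := by
        rw [mul_val_of_gt (show ¬ (mk 0 x.val.1 hωα hba : Bicyclic α).val.2 ≤ y.val.1 from hc)]
        rfl
      by_cases hd : y.val.2 + (x.val.1 - y.val.1) ≤ x.val.2
      · rw [mul_val_of_le (show ((mk 0 x.val.1 hωα hba : Bicyclic α) * y).val.2 ≤
            (mk x.val.2 0 hbb hωα : Bicyclic α).val.1 from by rw [e1]; exact hd), e1] at hyval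
        dsimp only [mk] at hyval
        have h1 := (Prod.ext_iff.1 hyval).1
        rw [zero_add] at h1
        exact ⟨not_le.1 hc, le_antisymm hd (Ordinal.sub_eq_zero_iff_le.1 h1)⟩
      · rw [mul_val_of_gt (show ¬ ((mk 0 x.val.1 hωα hba : Bicyclic α) * y).val.2 ≤
            (mk x.val.2 0 hbb hωα : Bicyclic α).val.1 from by rw [e1]; exact hd), e1] at hyval
        dsimp only [mk] at hyval
        have h2 := (Prod.ext_iff.1 hyval).2
        rw [zero_add] at h2
        exact absurd (Ordinal.sub_eq_zero_iff_le.1 h2) hd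
  -- exclusion of points with first coordinate < a'
  have excl₅ : ∃ N ∈ nhds x, ∀ y ∈ N,
      ¬(y.val.1 < a' ∧ y.val.2 + (x.val.1 - y.val.1) = x.val.2) := by
    have hbad : ∀ y : Bicyclic α, y.val.1 < a' → y.val.2 + (x.val.1 - y.val.1) = x.val.2 →
        ((mk 0 a' hωα ha'α : Bicyclic α) * y).val = (0, y.val.2 + (a' - y.val.1)) ∧
        (∃ μ, y.val.2 + (a' - y.val.1) = ω ^ e * μ) ∧
        (y.val.2 + (a' - y.val.1)) + ω ^ e = x.val.2 := by
      intro y hlt hE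
      obtain ⟨k, hk, hck⟩ := SL (show y.val.1 < ω ^ e * q₀ from ha' ▸ hlt)
      have hck' : y.val.1 + ω ^ e * k = a' := by rw [hck, ← ha']
      have hsub : a' - y.val.1 = ω ^ e * k := by rw [← hck', Ordinal.add_sub_cancel]
      have hac : x.val.1 - y.val.1 = ω ^ e * k + ω ^ e := by
        rw [haeq, ← hck', add_assoc, Ordinal.add_sub_cancel]
      refine ⟨?_, ?_, ?_⟩
      · rw [mul_val_of_gt (show ¬ (mk 0 a' hωα ha'α : Bicyclic α).val.2 ≤ y.val.1 from
          not_le.2 hlt)]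
        rfl
      · rw [hsub]; exact div_abs hk
      · rw [hsub, add_assoc, ← hac, hE]
    by_cases H : ∃ ζ, (∃ μ, ζ = ω ^ e * μ) ∧ ζ + ω ^ e = x.val.2
    · obtain ⟨ζ, hζd, hζe⟩ := H
      have hζα : ζ < ω ^ α := lt_of_le_of_lt (le_trans (le_self_add) hζe.le) hbb
      have hxw : (mk 0 a' hωα ha'α : Bicyclic α) * x ≠ (mk 0 ζ hωα hζα : Bicyclic α) := by
        intro hcon
        have h2 := congrArg Subtype.val hcon
        rw [mul_val_of_le (show (mk 0 a' hωα ha'α : Bicyclic α).val.2 ≤ x.val.1 from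
          ha'le)] at h2
        dsimp only [mk] at h2
        have h3 := (Prod.ext_iff.1 h2).1
        rw [zero_add, haa'] at h3
        exact hA0.ne' h3
      refine ⟨(fun t : Bicyclic α => (mk 0 a' hωα ha'α : Bicyclic α) * t) ⁻¹'
        {(mk 0 ζ hωα hζα : Bicyclic α)}ᶜ, ?_, ?_⟩
      · exact (((cont_left hτ _).isOpen_preimage _ isOpen_compl_singleton).mem_nhds hxw)
      · rintro y hy ⟨h1', h2'⟩
        obtain ⟨hval, hdvd, hplus⟩ := hbad y h1' h2'
        apply hy
        show (mk 0 a' hωα ha'α : Bicyclic α) * y = (mk 0 ζ hωα hζα : Bicyclic α)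
        apply Subtype.ext
        rw [hval]
        have hzeq : y.val.2 + (a' - y.val.1) = ζ := UQ hdvd hζd hplus hζe
        rw [hzeq]
        rfl
    · refine ⟨Set.univ, Filter.univ_mem, ?_⟩
      rintro y - ⟨h1', h2'⟩
      obtain ⟨-, hdvd, hplus⟩ := hbad y h1' h2'
      exact H ⟨_, hdvd, hplus⟩
  -- exclusion of points with second coordinate < b'
  have excl₆ : ∃ N ∈ nhds x, ∀ y ∈ N,
      ¬(y.val.2 < b' ∧ y.val.1 + (x.val.2 - y.val.2) = x.val.1) := by
    have hbad : ∀ y : Bicyclic α, y.val.2 < b' → y.val.1 + (x.val.2 - y.val.2) = x.val.1 →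
        (y * (mk b' 0 hb'α hωα : Bicyclic α)).val = (y.val.1 + (b' - y.val.2), 0) ∧
        (∃ μ, y.val.1 + (b' - y.val.2) = ω ^ f * μ) ∧
        (y.val.1 + (b' - y.val.2)) + ω ^ f = x.val.1 := by
      intro y hlt hE
      obtain ⟨k, hk, hck⟩ := SL (show y.val.2 < ω ^ f * r₀ from hb' ▸ hlt)
      have hck' : y.val.2 + ω ^ f * k = b' := by rw [hck, ← hb']
      have hsub : b' - y.val.2 = ω ^ f * k := by rw [← hck', Ordinal.add_sub_cancel]
      have hac : x.val.2 - y.val.2 = ω ^ f * k + ω ^ f := by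
        rw [hbeq, ← hck', add_assoc, Ordinal.add_sub_cancel]
      refine ⟨?_, ?_, ?_⟩
      · rw [mul_val_of_le (show y.val.2 ≤ (mk b' 0 hb'α hωα : Bicyclic α).val.1 from hlt.le)]
        rfl
      · rw [hsub]; exact div_abs hk
      · rw [hsub, add_assoc, ← hac, hE]
    by_cases H : ∃ ζ, (∃ μ, ζ = ω ^ f * μ) ∧ ζ + ω ^ f = x.val.1
    · obtain ⟨ζ, hζd, hζe⟩ := H
      have hζα : ζ < ω ^ α := lt_of_le_of_lt (le_trans (le_self_add) hζe.le) hba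
      have hxw : x * (mk b' 0 hb'α hωα : Bicyclic α) ≠ (mk ζ 0 hζα hωα : Bicyclic α) := by
        intro hcon
        have h2 := congrArg Subtype.val hcon
        rw [mul_val_of_gt (show ¬ x.val.2 ≤ (mk b' 0 hb'α hωα : Bicyclic α).val.1 from
          not_le.2 hb'ltb)] at h2
        dsimp only [mk] at h2
        have h3 := (Prod.ext_iff.1 h2).2
        rw [zero_add, hbb'] at h3
        exact hB0.ne' h3
      refine ⟨(fun t : Bicyclic α => t * (mk b' 0 hb'α hωα : Bicyclic α)) ⁻¹'
        {(mk ζ 0 hζα hωα : Bicyclic α)}ᶜ, ?_, ?_⟩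
      · exact (((cont_right hτ _).isOpen_preimage _ isOpen_compl_singleton).mem_nhds hxw)
      · rintro y hy ⟨h1', h2'⟩
        obtain ⟨hval, hdvd, hplus⟩ := hbad y h1' h2'
        apply hy
        show y * (mk b' 0 hb'α hωα : Bicyclic α) = (mk ζ 0 hζα hωα : Bicyclic α)
        apply Subtype.ext
        rw [hval]
        have hzeq : y.val.1 + (b' - y.val.2) = ζ := UQ hdvd hζd hplus hζe
        rw [hzeq]
        rfl
    · refine ⟨Set.univ, Filter.univ_mem, ?_⟩
      rintro y - ⟨h1', h2'⟩
      obtain ⟨-, hdvd, hplus⟩ := hbad y h1' h2'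
      exact H ⟨_, hdvd, hplus⟩
  -- assemble
  obtain ⟨N₅, hN₅, hP₅⟩ := excl₅
  obtain ⟨N₆, hN₆, hP₆⟩ := excl₆
  have hN₁ : (fun t : Bicyclic α =>
      (mk 0 x.val.1 hωα hba : Bicyclic α) * t * (mk x.val.2 0 hbb hωα)) ⁻¹' {1} ∈ nhds x :=
    fiber_mem_nhds hτ h1α (hτ _ _) hx1
  refine Filter.mem_of_superset (Filter.inter_mem hN₁ (Filter.inter_mem hN₅ hN₆)) ?_
  rintro y ⟨hy1, hy5, hy6⟩
  have hy1' : (mk 0 x.val.1 hωα hba : Bicyclic α) * y * (mk x.val.2 0 hbb hωα) = 1 := hy1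
  rcases fib y hy1' with hyx | ⟨hclt, hE⟩
  · exact Set.mem_union_left _ hyx
  · have hanec : x.val.1 - y.val.1 ≠ 0 := by
      intro h0
      have h1 := Ordinal.add_sub_cancel_of_le hclt.le
      rw [h0, add_zero] at h1
      exact hclt.ne h1
    have hdb : y.val.2 < x.val.2 := by
      calc y.val.2 = y.val.2 + 0 := (add_zero _).symm
        _ < y.val.2 + (x.val.1 - y.val.1) :=
            (add_lt_add_iff_left _).2 (pos_iff_ne_zero.2 hanec)
        _ = x.val.2 := hE
    have hge5 : a' ≤ y.val.1 := by
      by_contra hcc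
      push_neg at hcc
      exact hP₅ y hy5 ⟨hcc, hE⟩
    have hge6 : b' ≤ y.val.2 := by
      by_contra hcc
      push_neg at hcc
      apply hP₆ y hy6
      refine ⟨hcc, ?_⟩
      have hbd : x.val.2 - y.val.2 = x.val.1 - y.val.1 := by
        rw [← hE, Ordinal.add_sub_cancel]
      rw [hbd, Ordinal.add_sub_cancel_of_le hclt.le]
    refine Set.mem_union_right _ ⟨y.val.1 - a', y.val.2 - b', ?_, ?_, ?_⟩
    · have h1 := Ordinal.add_sub_cancel_of_le hge5
      have h2 : a' + (y.val.1 - a') < a' + ω ^ e := by rw [h1, ← haeq]; exact hclt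
      exact (add_lt_add_iff_left _).1 h2
    · have h1 := Ordinal.add_sub_cancel_of_le hge6
      have h2 : b' + (y.val.2 - b') < b' + ω ^ f := by rw [h1, ← hbeq]; exact hdb
      exact (add_lt_add_iff_left _).1 h2
    · rw [Ordinal.add_sub_cancel_of_le hge5, Ordinal.add_sub_cancel_of_le hge6]
end
end

section
/- Let α be an ordinal, let τ be a Hausdorff shift-continuous topology on the α-bicyclic monoid B_α, and let (a,b) ∈ B_α with a and b nonzero, with Cantor normal forms a = a₁ω^{n₁}+⋯+a_mω^{n_m} and b = b₁ω^{k₁}+⋯+b_tω^{k_t}. Define h_{(a,b)} : B_α → B_α by h_{(a,b)}(x,y) = (a₁ω^{n₁}+⋯+(a_m−1)ω^{n_m}, 0)·(x,y)·(0, b₁ω^{k₁}+⋯+(b_t−1)ω^{k_t}). Then the restriction of h_{(a,b)} to the set A = {(x,y) : x < ω^{n_m}, y < ω^{k_t}} ∪ {(ω^{n_m}, ω^{k_t})} is a homeomorphism of A onto the set B = {(a₁ω^{n₁}+⋯+(a_m−1)ω^{n_m}+γ, b₁ω^{k₁}+⋯+(b_t−1)ω^{k_t}+δ) : γ < ω^{n_m}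 and δ < ω^{k_t}} ∪ {(a,b)}, where both A and B carry the subspace topology inherited from τ. -/
open Ordinal Set Topology

noncomputable section

namespace Bicyclic

lemma mul_val {α : Ordinal} (x y : Bicyclic α) :
    (x * y).val = if x.val.2 ≤ y.val.1
      then (x.val.1 + (y.val.1 - x.val.2), y.val.2)
      else (x.val.1, y.val.2 + (x.val.2 - y.val.1)) := by
  rw [show x * y = (Mul.mul x y) from rfl]
  unfold Mul.mul instMul
  exact apply_ite Subtype.val _ _ _

end Bicyclic

/-- With the notation of Statement 1 (Cantor normal forms of `a` and `b`
encoded by `a = a' + ω^e`, `ω^e ∣ a'`, `b = b' + ω^f`, `ω^f ∣ b'`), the map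
`h_{(a,b)} : (x,y) ↦ (a',0)·(x,y)·(0,b')` restricts to a homeomorphism from
`A = {(x,y) : x < ω^e, y < ω^f} ∪ {(ω^e, ω^f)}` onto
`B = {(a'+γ, b'+δ) : γ < ω^e, δ < ω^f} ∪ {(a,b)}`, both carrying the subspace
topology. -/
theorem restriction_homeomorphism (α : Ordinal) [TopologicalSpace (Bicyclic α)]
    [T2Space (Bicyclic α)] (hτ : ShiftContinuous (Bicyclic α))
    (x : Bicyclic α) (ha : x.val.1 ≠ 0) (hb : x.val.2 ≠ 0)
    (e f a' b' : Ordinal)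
    (hamul : ∃ q, a' = ω ^ e * q) (haeq : x.val.1 = a' + ω ^ e)
    (hbmul : ∃ q, b' = ω ^ f * q) (hbeq : x.val.2 = b' + ω ^ f)
    (ha' : a' < ω ^ α) (hb' : b' < ω ^ α) :
    ∃ H : ({y : Bicyclic α | (y.val.1 < ω ^ e ∧ y.val.2 < ω ^ f) ∨
              y.val = (ω ^ e, ω ^ f)} : Set (Bicyclic α)) ≃ₜ
          ({y : Bicyclic α | (∃ γ δ : Ordinal, γ < ω ^ e ∧ δ < ω ^ f ∧
              y.val = (a' + γ, b' + δ)) ∨ y = x} : Set (Bicyclic α)),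
      ∀ z, (H z : Bicyclic α) =
        Bicyclic.mk a' 0 ha' (opow_pos α omega0_pos) * (z : Bicyclic α) *
          Bicyclic.mk 0 b' (opow_pos α omega0_pos) hb' := by
  set p0 : (0 : Ordinal) < ω ^ α := opow_pos α omega0_pos with hp0
  set F : Bicyclic α → Bicyclic α := fun z =>
    Bicyclic.mk a' 0 ha' p0 * z * Bicyclic.mk 0 b' p0 hb' with hFdef
  set G : Bicyclic α → Bicyclic α := fun z =>
    Bicyclic.mk 0 a' p0 ha' * z * Bicyclic.mk b' 0 hb' p0 with hGdef
  have hF : ∀ z : Bicyclic α, (F z).val = (a' + z.val.1, b' + z.val.2) := by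
    intro z
    have h1 : (Bicyclic.mk a' 0 ha' p0 * z).val = (a' + z.val.1, z.val.2) := by
      rw [Bicyclic.mul_val]
      simp [Bicyclic.mk, Ordinal.sub_zero, zero_le]
    show (Bicyclic.mk a' 0 ha' p0 * z * Bicyclic.mk 0 b' p0 hb').val = _
    rw [Bicyclic.mul_val, h1]
    by_cases h : z.val.2 ≤ 0
    · have hz : z.val.2 = 0 := le_antisymm h zero_le
      simp [Bicyclic.mk, hz, Ordinal.sub_zero]
    · simp [Bicyclic.mk, h, Ordinal.sub_zero]
  have hG : ∀ z : Bicyclic α, a' ≤ z.val.1 → b' ≤ z.val.2 →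
      (G z).val = (z.val.1 - a', z.val.2 - b') := by
    intro z h1 h2
    have ha1 : (Bicyclic.mk 0 a' p0 ha' * z).val = (z.val.1 - a', z.val.2) := by
      rw [Bicyclic.mul_val]
      simp [Bicyclic.mk, h1]
    show (Bicyclic.mk 0 a' p0 ha' * z * Bicyclic.mk b' 0 hb' p0).val = _
    rw [Bicyclic.mul_val, ha1]
    by_cases h : z.val.2 ≤ b'
    · have hz : z.val.2 = b' := le_antisymm h h2
      simp [Bicyclic.mk, hz, Ordinal.sub_self]
    · simp [Bicyclic.mk, h]
  have hmemF : ∀ z : Bicyclic α, ((z.val.1 < ω ^ e ∧ z.val.2 < ω ^ f) ∨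
      z.val = (ω ^ e, ω ^ f)) →
      ((∃ γ δ : Ordinal, γ < ω ^ e ∧ δ < ω ^ f ∧
        (F z).val = (a' + γ, b' + δ)) ∨ F z = x) := by
    intro z hz
    rcases hz with ⟨h1, h2⟩ | h
    · exact Or.inl ⟨z.val.1, z.val.2, h1, h2, hF z⟩
    · refine Or.inr (Subtype.ext ?_)
      rw [hF z, h]
      exact Prod.ext (haeq.symm) (hbeq.symm)
  have hmemG : ∀ z : Bicyclic α, ((∃ γ δ : Ordinal, γ < ω ^ e ∧ δ < ω ^ f ∧
      z.val = (a' + γ, b' + δ)) ∨ z = x) →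
      (((G z).val.1 < ω ^ e ∧ (G z).val.2 < ω ^ f) ∨
        (G z).val = (ω ^ e, ω ^ f)) := by
    intro z hz
    rcases hz with ⟨γ, δ, hγ, hδ, hv⟩ | h
    · have h1 : z.val.1 = a' + γ := by rw [hv]
      have h2 : z.val.2 = b' + δ := by rw [hv]
      rw [hG z (h1 ▸ (le_self_add : a' ≤ a' + γ)) (h2 ▸ (le_self_add : b' ≤ b' + δ))]
      left
      constructor
      · simpa [h1, Ordinal.add_sub_cancel] using hγ
      · simpa [h2, Ordinal.add_sub_cancel] using hδ
    · subst h
      rw [hG z (haeq ▸ (le_self_add : a' ≤ a' + ω ^ e)) (hbeq ▸ (le_self_add : b' ≤ b' + ω ^ f))]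
      right
      rw [haeq, hbeq, Ordinal.add_sub_cancel, Ordinal.add_sub_cancel]
  have hGF : ∀ z : Bicyclic α, G (F z) = z := by
    intro z
    apply Subtype.ext
    rw [hG (F z) (by rw [hF z]; exact le_self_add)
        (by rw [hF z]; exact le_self_add), hF z]
    simp [Ordinal.add_sub_cancel]
  have hFG : ∀ z : Bicyclic α, a' ≤ z.val.1 → b' ≤ z.val.2 → F (G z) = z := by
    intro z h1 h2
    apply Subtype.ext
    rw [hF (G z), hG z h1 h2]
    exact Prod.ext (Ordinal.add_sub_cancel_of_le h1) (Ordinal.add_sub_cancel_of_le h2)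
  have hBle : ∀ z : Bicyclic α, ((∃ γ δ : Ordinal, γ < ω ^ e ∧ δ < ω ^ f ∧
      z.val = (a' + γ, b' + δ)) ∨ z = x) → a' ≤ z.val.1 ∧ b' ≤ z.val.2 := by
    intro z hz
    rcases hz with ⟨γ, δ, _, _, hv⟩ | h
    · constructor
      · rw [show z.val.1 = a' + γ from by rw [hv]]; exact le_self_add
      · rw [show z.val.2 = b' + δ from by rw [hv]]; exact le_self_add
    · subst h
      exact ⟨haeq ▸ (le_self_add : a' ≤ a' + ω ^ e), hbeq ▸ (le_self_add : b' ≤ b' + ω ^ f)⟩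
  refine ⟨{
    toFun := fun z => ⟨F z, hmemF z z.2⟩
    invFun := fun z => ⟨G z, hmemG z z.2⟩
    left_inv := fun z => Subtype.ext (hGF z)
    right_inv := fun z => Subtype.ext (hFG z (hBle z z.2).1 (hBle z z.2).2)
    continuous_toFun := Continuous.subtype_mk
      ((hτ (Bicyclic.mk a' 0 ha' p0) (Bicyclic.mk 0 b' p0 hb')).comp
        continuous_subtype_val) _
    continuous_invFun := Continuous.subtype_mk
      ((hτ (Bicyclic.mk 0 a' p0 ha') (Bicyclic.mk b' 0 hb' p0)).comp
        continuous_subtype_val) _ }, fun z => rfl⟩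
end
end

section
/- Let k be a non-negative integer and let τ be a locally compact Hausdorff shift-continuous topology on B⁰(B_k) in which the adjoined zero 0* is not isolated. Then for every open neighborhood U of 0* there exists a non-negative integer n such that the set U ∩ [n,m] is non-empty for infinitely many non-negative integers m. -/
open Ordinal Set Topology

noncomputable section

/-! ### Auxiliary lemmas -/

namespace StatementFive

section BicyclicLemmas
variable {α : Ordinal}

lemma bic_mul_def (x y : Bicyclic α) : x * y =
    (if x.val.2 ≤ y.val.1 then
      (⟨(x.val.1 + (y.val.1 - x.val.2), y.val.2),
        (principal_add_omega0_opow α) x.2.1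
          (lt_of_le_of_lt (Ordinal.sub_le_self _ _) y.2.1),
        y.2.2⟩ : Bicyclic α)
    else
      ⟨(x.val.1, y.val.2 + (x.val.2 - y.val.1)),
        x.2.1,
        (principal_add_omega0_opow α) y.2.2
          (lt_of_le_of_lt (Ordinal.sub_le_self _ _) x.2.2)⟩) := rfl

lemma bic_one_mul (s : Bicyclic α) : (1 : Bicyclic α) * s = s := by
  rw [bic_mul_def, if_pos (show (1 : Bicyclic α).val.2 ≤ s.val.1 from zero_le)]
  apply Subtype.ext
  show ((0 : Ordinal) + (s.val.1 - 0), s.val.2) = s.val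
  rw [Ordinal.sub_zero, zero_add]

lemma bic_mul_one (s : Bicyclic α) : s * (1 : Bicyclic α) = s := by
  rw [bic_mul_def]
  by_cases h : s.val.2 ≤ (1 : Bicyclic α).val.1
  · rw [if_pos h]
    have h2 : s.val.2 = 0 := le_antisymm h zero_le
    apply Subtype.ext
    show (s.val.1 + ((0 : Ordinal) - s.val.2), (0 : Ordinal)) = s.val
    rw [h2, Ordinal.sub_zero, add_zero, ← h2]
  · rw [if_neg h]
    apply Subtype.ext
    show (s.val.1, (0 : Ordinal) + (s.val.2 - 0)) = s.val
    rw [Ordinal.sub_zero, zero_add]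

end BicyclicLemmas

section BruckLemmas
variable {S : Type*} [Mul S] [One S]

omit [One S] in
lemma mk_mul_mk (n m n' m' : ℕ) (s s' : S) :
    Bruck.mk n s m * Bruck.mk n' s' m' =
      if m < n' then Bruck.mk (n + n' - m) s' m'
      else if n' < m then Bruck.mk n s (m' + m - n')
      else Bruck.mk n (s * s') m' := rfl

omit [Mul S] [One S] in
lemma mk_eqn {n n' m m' : ℕ} (s : S) (h1 : n = n') (h2 : m = m') :
    Bruck.mk n s m = Bruck.mk n' s m' := by subst h1; subst h2; rfl

lemma bruck_one_mul (hone : ∀ s : S, 1 * s = s) (n m : ℕ) (s : S) :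
    Bruck.mk 0 (1 : S) 0 * Bruck.mk n s m = Bruck.mk n s m := by
  rcases Nat.eq_zero_or_pos n with hn | hn
  · subst hn
    rw [mk_mul_mk, if_neg (by omega), if_neg (by omega), hone]
  · rw [mk_mul_mk, if_pos (by omega)]
    exact mk_eqn _ (by omega) rfl

lemma bruck_mul_one (hone' : ∀ s : S, s * 1 = s) (n m : ℕ) (s : S) :
    Bruck.mk n s m * Bruck.mk 0 (1 : S) 0 = Bruck.mk n s m := by
  rcases Nat.eq_zero_or_pos m with hm | hm
  · subst hm
    rw [mk_mul_mk, if_neg (by omega), if_neg (by omega), hone']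
  · rw [mk_mul_mk, if_neg (by omega), if_pos (by omega)]
    exact mk_eqn _ rfl (by omega)

lemma bruck_colshift (hone' : ∀ s : S, s * 1 = s) (n m : ℕ) (s : S) :
    Bruck.mk n s m * Bruck.mk 0 (1 : S) 1 = Bruck.mk n s (m + 1) := by
  rcases Nat.eq_zero_or_pos m with hm | hm
  · subst hm
    rw [mk_mul_mk, if_neg (by omega), if_neg (by omega), hone']
  · rw [mk_mul_mk, if_neg (by omega), if_pos (by omega)]
    exact mk_eqn _ rfl (by omega)

lemma bruck_rowfix (hone : ∀ s : S, 1 * s = s) {p n : ℕ} (h : p + 1 ≤ n) (m : ℕ) (s : S) :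
    Bruck.mk (p + 1) (1 : S) (p + 1) * Bruck.mk n s m = Bruck.mk n s m := by
  rcases eq_or_lt_of_le h with hn | hn
  · rw [mk_mul_mk, if_neg (by omega), if_neg (by omega), hone]
    exact mk_eqn _ (by omega) rfl
  · rw [mk_mul_mk, if_pos (by omega)]
    exact mk_eqn _ (by omega) rfl

lemma bruck_rowbump (p q : ℕ) (t : S) :
    Bruck.mk (p + 1) (1 : S) (p + 1) * Bruck.mk p t q = Bruck.mk (p + 1) (1 : S) (q + 1) := by
  rw [mk_mul_mk, if_neg (by omega), if_pos (by omega)]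
  exact mk_eqn _ rfl (by omega)

omit [One S] in
lemma bruck_collapse {n p : ℕ} (h : n < p) (m : ℕ) (s s' : S) :
    Bruck.mk 0 s' p * Bruck.mk n s m = Bruck.mk 0 s' (m + p - n) := by
  rw [mk_mul_mk, if_neg (by omega), if_pos h]

end BruckLemmas

section CoeLemmas
variable {S : Type*} [Mul S] [One S]

lemma coe_cshift (hone : ∀ s : S, 1 * s = s) (hone' : ∀ s : S, s * 1 = s) (n m : ℕ) (s : S) :
    (↑(Bruck.mk 0 (1 : S) 0) : BruckZero S) * ↑(Bruck.mk n s m) * ↑(Bruck.mk 0 (1 : S) 1)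
      = ↑(Bruck.mk n s (m + 1)) := by
  rw [← WithZero.coe_mul, ← WithZero.coe_mul, bruck_one_mul hone, bruck_colshift hone']

lemma coe_gshift (hone' : ∀ s : S, s * 1 = s) {n p : ℕ} (h : n < p) (m : ℕ) (s : S) :
    (↑(Bruck.mk 0 (1 : S) p) : BruckZero S) * ↑(Bruck.mk n s m) * ↑(Bruck.mk 0 (1 : S) 0)
      = ↑(Bruck.mk 0 (1 : S) (m + p - n)) := by
  rw [← WithZero.coe_mul, ← WithZero.coe_mul, bruck_collapse h, bruck_mul_one hone']

lemma coe_rowfix (hone : ∀ s : S, 1 * s = s) (hone' : ∀ s : S, s * 1 = s)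
    {p n : ℕ} (h : p + 1 ≤ n) (m : ℕ) (s : S) :
    (↑(Bruck.mk (p + 1) (1 : S) (p + 1)) : BruckZero S) * ↑(Bruck.mk n s m) * ↑(Bruck.mk 0 (1 : S) 0)
      = ↑(Bruck.mk n s m) := by
  rw [← WithZero.coe_mul, ← WithZero.coe_mul, bruck_rowfix hone h, bruck_mul_one hone']

lemma coe_rowbump (hone' : ∀ s : S, s * 1 = s) (p q : ℕ) (t : S) :
    (↑(Bruck.mk (p + 1) (1 : S) (p + 1)) : BruckZero S) * ↑(Bruck.mk p t q) * ↑(Bruck.mk 0 (1 : S) 0)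
      = ↑(Bruck.mk (p + 1) (1 : S) (q + 1)) := by
  rw [← WithZero.coe_mul, ← WithZero.coe_mul, bruck_rowbump, bruck_mul_one hone']

omit [One S] in
lemma shift_zero (a b : BruckZero S) : a * (0 : BruckZero S) * b = 0 := by
  rw [mul_zero, zero_mul]

end CoeLemmas

end StatementFive

open StatementFive Filter

/-- For a locally compact Hausdorff shift-continuous topology on `B⁰(B_k)`
with non-isolated zero, every open neighborhood `U` of `0*` meets the boxes `[n,m]` for
some `n` and infinitely many `m`. -/
theorem exists_row_meeting_infinitely_many_boxes (k : ℕ)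
    [TopologicalSpace (BruckZero (Bicyclic k))] [T2Space (BruckZero (Bicyclic k))]
    [LocallyCompactSpace (BruckZero (Bicyclic k))]
    (hτ : ShiftContinuous (BruckZero (Bicyclic k)))
    (h0 : ¬ IsOpen ({0} : Set (BruckZero (Bicyclic k))))
    (U : Set (BruckZero (Bicyclic k)))
    (hU : IsOpen U) (h0U : (0 : BruckZero (Bicyclic k)) ∈ U) :
    ∃ n : ℕ, {m : ℕ | (U ∩ box (Bicyclic k) n m).Nonempty}.Infinite := by
  classical
  have hone : ∀ s : Bicyclic (k : Ordinal), 1 * s = s := bic_one_mul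
  have hone' : ∀ s : Bicyclic (k : Ordinal), s * 1 = s := bic_mul_one
  -- if the 0-th row already meets infinitely many boxes, we are done
  by_cases hfin : ({m : ℕ | (U ∩ box (Bicyclic k) 0 m).Nonempty}).Finite
  swap
  · exact ⟨0, hfin⟩
  -- a compact neighbourhood of 0 inside U
  obtain ⟨K, hKn, hKU, hKc⟩ := local_compact_nhds (hU.mem_nhds h0U)
  have hVopen : IsOpen (interior K) := isOpen_interior
  have h0V : (0 : BruckZero (Bicyclic k)) ∈ interior K := mem_interior_iff_mem_nhds.mpr hKn
  have hVK : interior K ⊆ K := interior_subset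
  have hVU : interior K ⊆ U := hVK.trans hKU
  by_cases hE : ∀ j : ℕ, ∃ n, ∃ s : Bicyclic (k : Ordinal), ∃ m, j ≤ n ∧
      (↑(Bruck.mk n s m) ∈ interior K) ∧
      (↑(Bruck.mk 0 (1 : Bicyclic (k : Ordinal)) 0) : BruckZero (Bicyclic k)) *
        ↑(Bruck.mk n s m) * ↑(Bruck.mk 0 (1 : Bicyclic (k : Ordinal)) 1) ∉ interior K
  · -- "unbounded rows of escape points": derive a contradiction via compactness
    exfalso
    choose nf sf mf hge hmem hnot using hE
    set O : Set (BruckZero (Bicyclic k)) := interior K ∩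
      ((fun x => (↑(Bruck.mk 0 (1 : Bicyclic (k : Ordinal)) 0) : BruckZero (Bicyclic k)) * x *
        ↑(Bruck.mk 0 (1 : Bicyclic (k : Ordinal)) 1)) ⁻¹' interior K) with hOdef
    have hOopen : IsOpen O := hVopen.inter (hVopen.preimage (hτ _ _))
    have h0O : (0 : BruckZero (Bicyclic k)) ∈ O := by
      refine ⟨h0V, ?_⟩
      show _ * (0 : BruckZero (Bicyclic k)) * _ ∈ interior K
      rw [shift_zero]
      exact h0V
    set y : ℕ → BruckZero (Bicyclic k) := fun j => ↑(Bruck.mk (nf j) (sf j) (mf j)) with hydef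
    have hyP : ∀ j, y j ∈ K \ O := fun j => ⟨hVK (hmem j), fun hjO => hnot j hjO.2⟩
    have hPc : IsCompact (K \ O) := hKc.diff hOopen
    have hle : Filter.map y Filter.atTop ≤ 𝓟 (K \ O) :=
      Filter.le_principal_iff.mpr (Filter.mem_map.mpr (Filter.univ_mem' hyP))
    obtain ⟨z, hzP, hz⟩ := hPc.exists_clusterPt hle
    have hz0 : z ≠ 0 := fun h => hzP.2 (by rw [h]; exact h0O)
    obtain ⟨b, rfl⟩ := WithZero.ne_zero_iff_exists.mp hz0
    -- the "bump" trick around the nonzero cluster point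
    have hbump : (↑(Bruck.mk (b.1 + 1) (1 : Bicyclic (k : Ordinal)) (b.1 + 1)) : BruckZero (Bicyclic k)) *
        ↑b * ↑(Bruck.mk 0 (1 : Bicyclic (k : Ordinal)) 0) =
        ↑(Bruck.mk (b.1 + 1) (1 : Bicyclic (k : Ordinal)) (b.2.2 + 1)) := by
      rw [show (↑b : BruckZero (Bicyclic k)) = ↑(Bruck.mk b.1 b.2.1 b.2.2) from rfl]
      exact coe_rowbump hone' b.1 b.2.2 b.2.1
    have hne : (↑b : BruckZero (Bicyclic k)) ≠
        ↑(Bruck.mk (b.1 + 1) (1 : Bicyclic (k : Ordinal)) (b.2.2 + 1)) := by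
      intro h
      have h2 := congrArg (fun w : Bruck (Bicyclic (k : Ordinal)) => w.1) (WithZero.coe_inj.mp h)
      simp only [Bruck.mk] at h2
      omega
    obtain ⟨Ω₁, Ω₂, hΩ₁o, hΩ₂o, hzΩ₁, hLΩ₂, hdisj⟩ := t2_separation hne
    have hNmem : (Ω₁ ∩ ((fun x => (↑(Bruck.mk (b.1 + 1) (1 : Bicyclic (k : Ordinal)) (b.1 + 1)) :
        BruckZero (Bicyclic k)) * x * ↑(Bruck.mk 0 (1 : Bicyclic (k : Ordinal)) 0)) ⁻¹' Ω₂))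
        ∈ 𝓝 (↑b : BruckZero (Bicyclic k)) := by
      refine IsOpen.mem_nhds (hΩ₁o.inter (hΩ₂o.preimage (hτ _ _))) ⟨hzΩ₁, ?_⟩
      show _ * (↑b : BruckZero (Bicyclic k)) * _ ∈ Ω₂
      rw [hbump]
      exact hLΩ₂
    have himg : y '' (Set.Ici (b.1 + 1)) ∈ Filter.map y Filter.atTop :=
      Filter.mem_map.mpr (Filter.mem_of_superset (Filter.Ici_mem_atTop (b.1 + 1))
        fun j hj => ⟨j, hj, rfl⟩)
    obtain ⟨w, ⟨hwΩ₁, hwpre⟩, j, hj, rfl⟩ := clusterPt_iff_nonempty.mp hz hNmem himg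
    have hfix : (↑(Bruck.mk (b.1 + 1) (1 : Bicyclic (k : Ordinal)) (b.1 + 1)) : BruckZero (Bicyclic k)) *
        y j * ↑(Bruck.mk 0 (1 : Bicyclic (k : Ordinal)) 0) = y j :=
      coe_rowfix hone hone' (le_trans hj (hge j)) (mf j) (sf j)
    have hyΩ₂ : y j ∈ Ω₂ := by
      have h3 : _ * y j * _ ∈ Ω₂ := hwpre
      rwa [hfix] at h3
    exact Set.disjoint_left.mp hdisj hwΩ₁ hyΩ₂
  · -- rows of escape points are bounded: produce an infinite row directly
    push_neg at hE
    obtain ⟨j₀, hbd⟩ := hE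
    -- a bound for the 0-th row
    obtain ⟨μ, hμ⟩ := hfin.bddAbove
    -- the neighbourhood W' of 0 whose nonzero points have rows ≥ j₀
    set W' : Set (BruckZero (Bicyclic k)) := interior K ∩
      ⋂ p ∈ Finset.range (j₀ + μ + 2),
        ((fun x => (↑(Bruck.mk 0 (1 : Bicyclic (k : Ordinal)) p) : BruckZero (Bicyclic k)) * x *
          ↑(Bruck.mk 0 (1 : Bicyclic (k : Ordinal)) 0)) ⁻¹' interior K) with hW'def
    have hW'open : IsOpen W' :=
      hVopen.inter (isOpen_biInter_finset fun p _ => hVopen.preimage (hτ _ _))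
    have h0W' : (0 : BruckZero (Bicyclic k)) ∈ W' := by
      refine ⟨h0V, Set.mem_iInter₂.mpr fun p _ => ?_⟩
      show _ * (0 : BruckZero (Bicyclic k)) * _ ∈ interior K
      rw [shift_zero]
      exact h0V
    have hex : ∃ x ∈ W', x ≠ (0 : BruckZero (Bicyclic k)) := by
      by_contra hcon
      push_neg at hcon
      exact h0 (by
        rw [show ({0} : Set (BruckZero (Bicyclic k))) = W' from
          (Set.eq_singleton_iff_unique_mem.mpr ⟨h0W', hcon⟩).symm]
        exact hW'open)
    obtain ⟨x, hxW', hx0⟩ := hex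
    obtain ⟨b, rfl⟩ := WithZero.ne_zero_iff_exists.mp hx0
    have hbV : (↑b : BruckZero (Bicyclic k)) ∈ interior K := hxW'.1
    -- the row of b is at least j₀
    have hrow : j₀ ≤ b.1 := by
      by_contra hlt
      push_neg at hlt
      have hpmem : b.1 + μ + 1 ∈ Finset.range (j₀ + μ + 2) := Finset.mem_range.mpr (by omega)
      have h2 := Set.mem_iInter₂.mp hxW'.2 _ hpmem
      have hcalc : (↑(Bruck.mk 0 (1 : Bicyclic (k : Ordinal)) (b.1 + μ + 1)) : BruckZero (Bicyclic k)) *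
          ↑b * ↑(Bruck.mk 0 (1 : Bicyclic (k : Ordinal)) 0) =
          ↑(Bruck.mk 0 (1 : Bicyclic (k : Ordinal)) (b.2.2 + (b.1 + μ + 1) - b.1)) := by
        rw [show (↑b : BruckZero (Bicyclic k)) = ↑(Bruck.mk b.1 b.2.1 b.2.2) from rfl]
        exact coe_gshift hone' (by omega) b.2.2 b.2.1
      have h3 : (↑(Bruck.mk 0 (1 : Bicyclic (k : Ordinal)) (b.2.2 + (b.1 + μ + 1) - b.1)) :
          BruckZero (Bicyclic k)) ∈ interior K := by
        rw [← hcalc]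
        exact h2
      have h4 : (b.2.2 + (b.1 + μ + 1) - b.1) ∈ {m : ℕ | (U ∩ box (Bicyclic k) 0 m).Nonempty} :=
        ⟨_, hVU h3, ⟨_, rfl⟩⟩
      have h5 := hμ h4
      omega
    -- iterate the column shift: the whole ray stays in interior K
    have hall : ∀ i : ℕ, (↑(Bruck.mk b.1 b.2.1 (b.2.2 + i)) : BruckZero (Bicyclic k)) ∈ interior K := by
      intro i
      induction i with
      | zero => exact hbV
      | succ i ih =>
        have h3 := hbd b.1 b.2.1 (b.2.2 + i) hrow ih
        have h4 : (↑(Bruck.mk 0 (1 : Bicyclic (k : Ordinal)) 0) : BruckZero (Bicyclic k)) *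
            ↑(Bruck.mk b.1 b.2.1 (b.2.2 + i)) * ↑(Bruck.mk 0 (1 : Bicyclic (k : Ordinal)) 1) =
            ↑(Bruck.mk b.1 b.2.1 (b.2.2 + i + 1)) := coe_cshift hone hone' _ _ _
        rw [h4] at h3
        exact h3
    refine ⟨b.1, Set.infinite_of_injective_forall_mem
      (f := fun i : ℕ => b.2.2 + i) (fun i j h => Nat.add_left_cancel h) fun i => ?_⟩
    exact ⟨↑(Bruck.mk b.1 b.2.1 (b.2.2 + i)), hVU (hall i), ⟨b.2.1, rfl⟩⟩
end
end

section
/- Let k be a non-negative integer and let τ be a locally compact Hausdorff shift-continuous topology on B⁰(B_k) in which the adjoined zero 0* is not isolated. Then every open neighborhood of 0* contains all but finitely many of the elements (n,(0,0),m) with n, m non-negative integers. -/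
open Ordinal Set Topology

noncomputable section

/- ===================== Auxiliary lemmas ===================== -/

namespace BB0Aux

set_option linter.unusedSectionVars false

theorem bmul_val {α : Ordinal} (x y : Bicyclic α) :
    (x * y).val =
      if x.val.2 ≤ y.val.1 then (x.val.1 + (y.val.1 - x.val.2), y.val.2)
      else (x.val.1, y.val.2 + (x.val.2 - y.val.1)) :=
  apply_ite Subtype.val _ _ _

theorem one_val {α : Ordinal} : (1 : Bicyclic α).val = (0, 0) := rfl

theorem bic_one_mul {α : Ordinal} (t : Bicyclic α) : 1 * t = t := by
  apply Subtype.ext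
  rw [bmul_val, one_val]
  simp [zero_le, Ordinal.sub_zero]

theorem bic_mul_one {α : Ordinal} (t : Bicyclic α) : t * 1 = t := by
  apply Subtype.ext
  rw [bmul_val, one_val]
  split_ifs with h
  · have h2 : t.val.2 = 0 := nonpos_iff_eq_zero.mp h
    simp [h2, Prod.ext_iff]
  · simp [Ordinal.sub_zero]

theorem bruck_mul_def {S : Type*} [Mul S] (x y : Bruck S) :
    x * y = if x.2.2 < y.1 then (x.1 + y.1 - x.2.2, y.2.1, y.2.2)
      else if y.1 < x.2.2 then (x.1, x.2.1, y.2.2 + x.2.2 - y.1)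
      else (x.1, x.2.1 * y.2.1, y.2.2) := rfl

variable {k : ℕ}

theorem mulA (t a : ℕ) (s : Bicyclic k) (b : ℕ) :
    (Bruck.mk t 1 0 : Bruck (Bicyclic k)) * Bruck.mk a s b = Bruck.mk (t + a) s b := by
  rcases Nat.eq_zero_or_pos a with rfl | ha
  · show (if (0:ℕ) < 0 then _ else if 0 < 0 then _ else (t, (1:Bicyclic k) * s, b)) = _
    simp only [if_neg (lt_irrefl 0), bic_one_mul]
    show (t, s, b) = (t + 0, s, b)
    rw [Nat.add_zero]
  · show (if (0:ℕ) < a then (t + a - 0, s, b) else _) = _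
    refine (if_pos ha).trans ?_
    show (t + a - 0, s, b) = (t + a, s, b)
    rw [Nat.sub_zero]

theorem mulB (t a : ℕ) (s : Bicyclic k) (b : ℕ) :
    (Bruck.mk a s b : Bruck (Bicyclic k)) * Bruck.mk 0 1 t = Bruck.mk a s (t + b) := by
  rcases Nat.eq_zero_or_pos b with rfl | hb
  · show (if (0:ℕ) < 0 then _ else if 0 < 0 then _ else (a, s * (1:Bicyclic k), t)) = _
    simp only [if_neg (lt_irrefl 0), bic_mul_one]
    show (a, s, t) = (a, s, t + 0)
    rw [Nat.add_zero]
  · show (if b < 0 then _ else if (0:ℕ) < b then (a, s, t + b - 0) else _) = _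
    rw [if_neg (Nat.not_lt_zero b), if_pos hb]
    show (a, s, t + b - 0) = (a, s, t + b)
    rw [Nat.sub_zero]

theorem mulCL (n c a : ℕ) (s : Bicyclic k) (b : ℕ) (h : a < c) :
    (Bruck.mk n 1 c : Bruck (Bicyclic k)) * Bruck.mk a s b = Bruck.mk n 1 (b + (c - a)) := by
  show (if c < a then _ else if a < c then (n, (1:Bicyclic k), b + c - a) else _) = _
  rw [if_neg (by omega), if_pos h]
  show (n, (1:Bicyclic k), b + c - a) = (n, 1, b + (c - a))
  have : b + c - a = b + (c - a) := by omega
  rw [this]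

theorem mulCR (c m a : ℕ) (s : Bicyclic k) (b : ℕ) (h : b < c) :
    (Bruck.mk a s b : Bruck (Bicyclic k)) * Bruck.mk c 1 m = Bruck.mk (a + (c - b)) 1 m := by
  show (if b < c then (a + c - b, (1:Bicyclic k), m) else _) = _
  refine (if_pos h).trans ?_
  show (a + c - b, (1:Bicyclic k), m) = (a + (c - b), 1, m)
  have : a + c - b = a + (c - b) := by omega
  rw [this]

theorem fixA (i a : ℕ) (s : Bicyclic k) (b : ℕ) (h : i ≤ a) :
    (Bruck.mk i 1 i : Bruck (Bicyclic k)) * Bruck.mk a s b = Bruck.mk a s b := by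
  rcases lt_or_eq_of_le h with h' | rfl
  · show (if i < a then (i + a - i, s, b) else _) = _
    refine (if_pos h').trans ?_
    show (i + a - i, s, b) = (a, s, b)
    have : i + a - i = a := by omega
    rw [this]
  · show (if i < i then _ else if i < i then _ else (i, (1:Bicyclic k) * s, b)) = _
    rw [if_neg (lt_irrefl i), if_neg (lt_irrefl i), bic_one_mul]
    rfl

theorem fixB (j a : ℕ) (s : Bicyclic k) (b : ℕ) (h : j ≤ b) :
    (Bruck.mk a s b : Bruck (Bicyclic k)) * Bruck.mk j 1 j = Bruck.mk a s b := by
  rcases lt_or_eq_of_le h with h' | rfl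
  · show (if b < j then _ else if j < b then (a, s, j + b - j) else _) = _
    rw [if_neg (by omega), if_pos h']
    show (a, s, j + b - j) = (a, s, b)
    have : j + b - j = b := by omega
    rw [this]
  · show (if j < j then _ else if j < j then _ else (a, s * (1:Bicyclic k), j)) = _
    rw [if_neg (lt_irrefl j), if_neg (lt_irrefl j), bic_mul_one]
    rfl

theorem coe3 {S : Type*} [Mul S] (p x q : Bruck S) :
    (↑p * ↑x * ↑q : BruckZero S) = ↑(p * x * q) := by
  rw [← WithZero.coe_mul, ← WithZero.coe_mul]

/-- The closed set `{0} ∪ {(a,s,b) : a ≥ i}` as a fixed point set. -/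
def Fa (k i : ℕ) : Set (BruckZero (Bicyclic k)) :=
  {x | (↑(Bruck.mk i (1 : Bicyclic k) i) : BruckZero (Bicyclic k)) * x
        * ↑(Bruck.mk 0 (1 : Bicyclic k) 0) = x}

/-- The closed set `{0} ∪ {(a,s,b) : b ≥ j}` as a fixed point set. -/
def Fb (k j : ℕ) : Set (BruckZero (Bicyclic k)) :=
  {x | (↑(Bruck.mk 0 (1 : Bicyclic k) 0) : BruckZero (Bicyclic k)) * x
        * ↑(Bruck.mk j (1 : Bicyclic k) j) = x}

variable [TopologicalSpace (BruckZero (Bicyclic k))] [T2Space (BruckZero (Bicyclic k))]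

theorem isClosed_Fa (hτ : ShiftContinuous (BruckZero (Bicyclic k))) (i : ℕ) :
    IsClosed (Fa k i) :=
  isClosed_eq (hτ _ _) continuous_id

theorem isClosed_Fb (hτ : ShiftContinuous (BruckZero (Bicyclic k))) (j : ℕ) :
    IsClosed (Fb k j) :=
  isClosed_eq (hτ _ _) continuous_id

theorem coe_mem_Fa_iff (i a : ℕ) (s : Bicyclic k) (b : ℕ) :
    (↑(Bruck.mk a s b) : BruckZero (Bicyclic k)) ∈ Fa k i ↔ i ≤ a := by
  unfold Fa
  rw [Set.mem_setOf_eq, coe3]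
  constructor
  · intro hEq
    by_contra hlt
    push_neg at hlt
    rw [mulCL i i a s b hlt, fixB 0 _ _ _ (Nat.zero_le _)] at hEq
    have h2 := WithZero.coe_inj.mp hEq
    have h3 := congrArg (fun z : Bruck (Bicyclic k) => z.1) h2
    simp only [Bruck.mk] at h3
    omega
  · intro hle
    rw [fixA i a s b hle, fixB 0 a s b (Nat.zero_le _)]

theorem coe_mem_Fb_iff (j a : ℕ) (s : Bicyclic k) (b : ℕ) :
    (↑(Bruck.mk a s b) : BruckZero (Bicyclic k)) ∈ Fb k j ↔ j ≤ b := by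
  unfold Fb
  rw [Set.mem_setOf_eq, coe3]
  constructor
  · intro hEq
    by_contra hlt
    push_neg at hlt
    rw [fixA 0 a s b (Nat.zero_le _), mulCR j j a s b hlt] at hEq
    have h2 := WithZero.coe_inj.mp hEq
    have h3 := congrArg (fun z : Bruck (Bicyclic k) => z.1) h2
    simp only [Bruck.mk] at h3
    omega
  · intro hle
    rw [fixA 0 a s b (Nat.zero_le _), fixB j a s b hle]

/-- A compact set avoiding `0` has bounded coordinates. -/
theorem bounded_of_compact (hτ : ShiftContinuous (BruckZero (Bicyclic k)))
    {C : Set (BruckZero (Bicyclic k))} (hC : IsCompact C)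
    (h0 : (0 : BruckZero (Bicyclic k)) ∉ C) :
    ∃ N : ℕ, ∀ (a : ℕ) (s : Bicyclic k) (b : ℕ),
      (↑(Bruck.mk a s b) : BruckZero (Bicyclic k)) ∈ C → a ≤ N ∧ b ≤ N := by
  have hGopen : ∀ N : ℕ, IsOpen ((Fa k (N+1))ᶜ ∩ (Fb k (N+1))ᶜ) := fun N =>
    ((isClosed_Fa hτ (N+1)).isOpen_compl).inter ((isClosed_Fb hτ (N+1)).isOpen_compl)
  have hcover : C ⊆ ⋃ N : ℕ, ((Fa k (N+1))ᶜ ∩ (Fb k (N+1))ᶜ) := by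
    intro x hx
    have hx0 : x ≠ 0 := fun h => h0 (h ▸ hx)
    obtain ⟨w, rfl⟩ := WithZero.ne_zero_iff_exists.mp hx0
    obtain ⟨a, s, b⟩ := w
    have hmkeq : ((a, s, b) : Bruck (Bicyclic k)) = Bruck.mk a s b := rfl
    rw [hmkeq]
    refine Set.mem_iUnion.mpr ⟨max a b, ?_, ?_⟩
    · intro hmem
      rw [coe_mem_Fa_iff] at hmem
      omega
    · intro hmem
      rw [coe_mem_Fb_iff] at hmem
      omega
  obtain ⟨T, hT⟩ := hC.elim_finite_subcover _ hGopen hcover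
  refine ⟨T.sup id, fun a s b hmem => ?_⟩
  have hmem2 := hT hmem
  rw [Set.mem_iUnion₂] at hmem2
  obtain ⟨N, hNT, hmemG⟩ := hmem2
  have hA : ¬ (N + 1 ≤ a) := fun hcon => hmemG.1 ((coe_mem_Fa_iff _ _ _ _).mpr hcon)
  have hB : ¬ (N + 1 ≤ b) := fun hcon => hmemG.2 ((coe_mem_Fb_iff _ _ _ _).mpr hcon)
  have hsup : N ≤ T.sup id := Finset.le_sup (f := id) hNT
  omega

end BB0Aux

open BB0Aux

/-- For a locally compact Hausdorff shift-continuous topology on `B⁰(B_k)`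
with non-isolated zero, every open neighborhood of `0*` contains all but finitely many
of the elements `(n,(0,0),m)`, `n, m ∈ ω`. -/
theorem neighborhood_contains_cofinitely_many_units (k : ℕ)
    [TopologicalSpace (BruckZero (Bicyclic k))] [T2Space (BruckZero (Bicyclic k))]
    [LocallyCompactSpace (BruckZero (Bicyclic k))]
    (hτ : ShiftContinuous (BruckZero (Bicyclic k)))
    (h0 : ¬ IsOpen ({0} : Set (BruckZero (Bicyclic k))))
    (U : Set (BruckZero (Bicyclic k)))
    (hU : IsOpen U) (h0U : (0 : BruckZero (Bicyclic k)) ∈ U) :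
    {p : ℕ × ℕ |
      (↑(Bruck.mk p.1 (1 : Bicyclic k) p.2) : BruckZero (Bicyclic k)) ∉ U}.Finite := by
  classical
  obtain ⟨K, hKn, hKU, hKc⟩ := local_compact_nhds (hU.mem_nhds h0U)
  have h0V : (0 : BruckZero (Bicyclic k)) ∈ interior K := mem_interior_iff_mem_nhds.mpr hKn
  -- Key uniform lemma: for any two-sided shift, all elements of K with a large
  -- coordinate are mapped into the interior of K.
  have key : ∀ p q : Bruck (Bicyclic k), ∃ N : ℕ, ∀ (a : ℕ) (s : Bicyclic k) (b : ℕ),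
      (↑(Bruck.mk a s b) : BruckZero (Bicyclic k)) ∈ K → (N < a ∨ N < b) →
      (↑(p * Bruck.mk a s b * q) : BruckZero (Bicyclic k)) ∈ interior K := by
    intro p q
    have hθ : Continuous fun x : BruckZero (Bicyclic k) => ↑p * x * ↑q := hτ _ _
    set C := K ∩ ((fun x : BruckZero (Bicyclic k) => ↑p * x * ↑q) ⁻¹' interior K)ᶜ with hCdef
    have hCc : IsCompact C :=
      hKc.inter_right ((hθ.isOpen_preimage _ isOpen_interior).isClosed_compl)
    have h0C : (0 : BruckZero (Bicyclic k)) ∉ C := by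
      rintro ⟨-, hmem⟩
      apply hmem
      show (↑p * (0 : BruckZero (Bicyclic k)) * ↑q) ∈ interior K
      rw [mul_zero, zero_mul]
      exact h0V
    obtain ⟨N, hN⟩ := bounded_of_compact hτ hCc h0C
    refine ⟨N, fun a s b hmem hbig => ?_⟩
    by_contra hnot
    have hxC : (↑(Bruck.mk a s b) : BruckZero (Bicyclic k)) ∈ C := by
      refine ⟨hmem, fun hpre => hnot ?_⟩
      have hpre' : (↑p * ↑(Bruck.mk a s b) * ↑q : BruckZero (Bicyclic k)) ∈ interior K := hpre
      rwa [coe3] at hpre'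
    have := hN a s b hxC
    omega
  -- Step 2 : a nonzero deep element of K
  obtain ⟨N₂, hN₂⟩ := key (Bruck.mk 0 1 0) (Bruck.mk 0 1 1)
  have hθt : Continuous fun x : BruckZero (Bicyclic k) =>
      ↑(Bruck.mk (N₂+1) (1 : Bicyclic k) 0) * x * ↑(Bruck.mk 0 (1 : Bicyclic k) (N₂+1)) :=
    hτ _ _
  set O := interior K ∩ ((fun x : BruckZero (Bicyclic k) =>
      ↑(Bruck.mk (N₂+1) (1 : Bicyclic k) 0) * x * ↑(Bruck.mk 0 (1 : Bicyclic k) (N₂+1)))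
      ⁻¹' interior K) with hOdef
  have hOopen : IsOpen O := isOpen_interior.inter (hθt.isOpen_preimage _ isOpen_interior)
  have h0O : (0 : BruckZero (Bicyclic k)) ∈ O := by
    refine ⟨h0V, ?_⟩
    show (↑(Bruck.mk (N₂+1) (1 : Bicyclic k) 0) * (0 : BruckZero (Bicyclic k))
        * ↑(Bruck.mk 0 (1 : Bicyclic k) (N₂+1))) ∈ interior K
    rw [mul_zero, zero_mul]
    exact h0V
  have hex : ∃ y ∈ O, y ≠ (0 : BruckZero (Bicyclic k)) := by
    by_contra hcon
    push_neg at hcon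
    have hsingle : O = {(0 : BruckZero (Bicyclic k))} :=
      Set.eq_singleton_iff_unique_mem.mpr ⟨h0O, fun y hy => hcon y hy⟩
    exact h0 (hsingle ▸ hOopen)
  obtain ⟨y, hyO, hy0⟩ := hex
  obtain ⟨w, rfl⟩ := WithZero.ne_zero_iff_exists.mp hy0
  obtain ⟨ay, s₀, by0⟩ := w
  have hmkeq : ((ay, s₀, by0) : Bruck (Bicyclic k)) = Bruck.mk ay s₀ by0 := rfl
  have hz : (↑(Bruck.mk ((N₂+1) + ay) s₀ ((N₂+1) + by0)) : BruckZero (Bicyclic k)) ∈ K := by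
    have h1 := hyO.2
    simp only [Set.mem_preimage] at h1
    rw [hmkeq, coe3, mulA, mulB] at h1
    exact interior_subset h1
  set a₀ := (N₂+1) + ay with ha₀
  set b₀ := (N₂+1) + by0 with hb₀
  -- climb in the second coordinate
  have climbB : ∀ r : ℕ, (↑(Bruck.mk a₀ s₀ (b₀ + r)) : BruckZero (Bicyclic k)) ∈ K := by
    intro r
    induction r with
    | zero => simpa using hz
    | succ n ih =>
      have h1 := hN₂ a₀ s₀ (b₀ + n) ih (Or.inr (by omega))
      rw [mulA, mulB] at h1
      have e1 : 0 + a₀ = a₀ := by omega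
      have e2 : 1 + (b₀ + n) = b₀ + (n + 1) := by omega
      rw [e1, e2] at h1
      exact interior_subset h1
  -- column-0 units deep in K
  obtain ⟨N₃, hN₃⟩ := key (Bruck.mk 0 1 (a₀+1)) (Bruck.mk 0 1 0)
  have colU : ∀ q : ℕ, b₀ + N₃ + 2 ≤ q →
      (↑(Bruck.mk 0 (1 : Bicyclic k) q) : BruckZero (Bicyclic k)) ∈ K := by
    intro q hq
    have h1 := hN₃ a₀ s₀ (b₀ + (q - 1 - b₀)) (climbB _) (Or.inr (by omega))
    rw [mulCL 0 (a₀+1) a₀ s₀ _ (by omega), fixB 0 _ _ _ (Nat.zero_le _)] at h1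
    have e : (b₀ + (q - 1 - b₀)) + ((a₀+1) - a₀) = q := by omega
    rw [e] at h1
    exact interior_subset h1
  -- all units (p, 1, q) with q large are in K
  obtain ⟨N₁, hN₁⟩ := key (Bruck.mk 1 1 0) (Bruck.mk 0 1 0)
  set q₁ := max (b₀ + N₃ + 2) (N₁ + 1) with hq₁def
  have hq₁a : b₀ + N₃ + 2 ≤ q₁ := le_max_left _ _
  have hq₁b : N₁ + 1 ≤ q₁ := le_max_right _ _
  have gridU : ∀ q : ℕ, q₁ ≤ q → ∀ p : ℕ,
      (↑(Bruck.mk p (1 : Bicyclic k) q) : BruckZero (Bicyclic k)) ∈ K := by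
    intro q hq p
    induction p with
    | zero => exact colU q (le_trans hq₁a hq)
    | succ n ih =>
      have h1 := hN₁ n 1 q ih (Or.inr (by omega))
      rw [mulA, fixB 0 _ _ _ (Nat.zero_le _)] at h1
      have e : 1 + n = n + 1 := by omega
      rw [e] at h1
      exact interior_subset h1
  -- rows: all but finitely many units of each row are in U
  have rowB : ∀ m₀ : ℕ, ∃ Nm : ℕ, ∀ p : ℕ, Nm + 2 ≤ p →
      (↑(Bruck.mk p (1 : Bicyclic k) m₀) : BruckZero (Bicyclic k)) ∈ U := by
    intro m₀
    obtain ⟨Nm, hNm⟩ := key (Bruck.mk 0 1 0) (Bruck.mk (q₁+1) 1 m₀)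
    refine ⟨Nm, fun p hp => ?_⟩
    have h1 := hNm (p-1) 1 q₁ (gridU q₁ le_rfl (p-1)) (Or.inl (by omega))
    rw [mulA, mulCR (q₁+1) m₀ _ _ _ (by omega)] at h1
    have e : (0 + (p-1)) + ((q₁+1) - q₁) = p := by omega
    rw [e] at h1
    exact hKU (interior_subset h1)
  choose Nrow hNrow using rowB
  set G := (Finset.range q₁).sup Nrow + 2 with hG
  have hsubset : {p : ℕ × ℕ |
      (↑(Bruck.mk p.1 (1 : Bicyclic k) p.2) : BruckZero (Bicyclic k)) ∉ U} ⊆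
      Set.Iio G ×ˢ Set.Iio q₁ := by
    rintro ⟨n, m⟩ hbad
    simp only [Set.mem_setOf_eq] at hbad
    have hm : m < q₁ := by
      by_contra hge
      push_neg at hge
      exact hbad (hKU (gridU m hge n))
    refine ⟨?_, hm⟩
    show n < G
    by_contra hge
    push_neg at hge
    have hle : Nrow m ≤ (Finset.range q₁).sup Nrow := Finset.le_sup (Finset.mem_range.mpr hm)
    exact hbad (hNrow m n (by omega))
  exact ((Set.finite_Iio G).prod (Set.finite_Iio q₁)).subset hsubset
end
end

section
/- Let k be a non-negative integer and let τ be a locally compact Hausdorff shift-continuous topology on B⁰(B_k). The set B = {(n,(0,0),m) : n, m non-negative integers} ∪ {0*} is a closed subsemigroup of (B⁰(B_k), τ), and B is isomorphic as a semigroup to the bicyclic monoid with an adjoined zero, with 0* corresponding to the zero. -/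
open Ordinal Set Topology

noncomputable section

/-- The bicyclic monoid on `ℕ × ℕ`. -/
def BicyclicNat : Type := ℕ × ℕ

instance : Mul BicyclicNat :=
  ⟨fun x y => if x.2 ≤ y.1 then (x.1 + y.1 - x.2, y.2) else (x.1, y.2 + x.2 - y.1)⟩


/-! ### Auxiliary lemmas -/

section Aux

variable {gam : Ordinal}

lemma Bicyclic.val_mul (x y : Bicyclic gam) :
    (x * y).val =
      if x.val.2 ≤ y.val.1 then (x.val.1 + (y.val.1 - x.val.2), y.val.2)
      else (x.val.1, y.val.2 + (x.val.2 - y.val.1)) := by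
  by_cases h : x.val.2 ≤ y.val.1
  · rw [if_pos h]; exact congrArg Subtype.val (if_pos h)
  · rw [if_neg h]; exact congrArg Subtype.val (if_neg h)

lemma Bicyclic.one_val_s7 : ((1 : Bicyclic gam)).val = ((0 : Ordinal), (0 : Ordinal)) := rfl

lemma Bicyclic.one_mul'_s7 (t : Bicyclic gam) : 1 * t = t := by
  apply Subtype.ext
  rw [Bicyclic.val_mul, if_pos (by rw [Bicyclic.one_val_s7]; exact zero_le)]
  rw [Bicyclic.one_val_s7]
  simp [Ordinal.sub_zero]

lemma Bicyclic.mul_one'_s7 (t : Bicyclic gam) : t * 1 = t := by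
  apply Subtype.ext
  rw [Bicyclic.val_mul, Bicyclic.one_val_s7]
  by_cases h : t.val.2 ≤ (0 : Ordinal)
  · rw [if_pos h]
    have h2 : t.val.2 = 0 := nonpos_iff_eq_zero.mp h
    simp only [Ordinal.sub_zero, h2, add_zero]
    exact Prod.ext rfl h2.symm
  · rw [if_neg h]
    simp [Ordinal.sub_zero]

lemma Bruck.mk_mul_mk {S : Type*} [Mul S] (n : ℕ) (s : S) (m c : ℕ) (t : S) (d : ℕ) :
    (Bruck.mk n s m) * (Bruck.mk c t d) =
      if m < c then Bruck.mk (n + c - m) t d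
      else if c < m then Bruck.mk n s (d + m - c)
      else Bruck.mk n (s * t) d := rfl

end Aux

section Aux2

variable {k : ℕ}

/-- Left multiplication by the identity `(0, 1, 0)` is the identity on `Bruck (Bicyclic k)`. -/
lemma Bruck.one_mul'' (y : Bruck (Bicyclic k)) : Bruck.mk 0 1 0 * y = y := by
  obtain ⟨n, s, m⟩ := y
  show Bruck.mk 0 1 0 * Bruck.mk n s m = Bruck.mk n s m
  rw [Bruck.mk_mul_mk]
  rcases Nat.eq_zero_or_pos n with hn | hn
  · subst hn
    rw [if_neg (by omega), if_neg (by omega)]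
    rw [Bicyclic.one_mul'_s7]
  · rw [if_pos hn]
    congr 1
    omega

/-- Right multiplication by the identity `(0, 1, 0)` is the identity on `Bruck (Bicyclic k)`. -/
lemma Bruck.mul_one'' (y : Bruck (Bicyclic k)) : y * Bruck.mk 0 1 0 = y := by
  obtain ⟨n, s, m⟩ := y
  show Bruck.mk n s m * Bruck.mk 0 1 0 = Bruck.mk n s m
  rw [Bruck.mk_mul_mk]
  rcases Nat.eq_zero_or_pos m with hm | hm
  · subst hm
    rw [if_neg (by omega), if_neg (by omega)]
    rw [Bicyclic.mul_one'_s7]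
  · rw [if_neg (by omega), if_pos hm]
    congr 1
    omega

end Aux2

/-- Key topological step: a closure point moved by a continuous map is in the closure of the
set of moved points. -/
lemma keyStep {X : Type*} [TopologicalSpace X] [T2Space X] {g : X → X} (hg : Continuous g)
    {S : Set X} {w : X} (hw : w ∈ closure S) (hne : g w ≠ w) :
    w ∈ closure {y | y ∈ S ∧ g y ≠ y} := by
  have hF : IsClosed {y : X | g y = y} := isClosed_eq hg continuous_id
  have hsub : S ⊆ {y | y ∈ S ∧ g y ≠ y} ∪ {y : X | g y = y} := by
    intro y hy
    by_cases h : g y = y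
    · exact Or.inr h
    · exact Or.inl ⟨hy, h⟩
  have h2 := closure_mono hsub hw
  rw [closure_union, hF.closure_eq] at h2
  rcases h2 with h | h
  · exact h
  · exact absurd h hne



lemma BicyclicNat.mul_def (p q : BicyclicNat) :
    p * q = (if p.2 ≤ q.1 then ((p.1 + q.1 - p.2, q.2) : ℕ × ℕ)
      else (p.1, q.2 + p.2 - q.1) : BicyclicNat) := rfl

lemma BicyclicNat.map_mul (k : ℕ) (p q : BicyclicNat) :
    Bruck.mk (p * q).1 (1 : Bicyclic k) (p * q).2 =
      Bruck.mk p.1 (1 : Bicyclic k) p.2 * Bruck.mk q.1 (1 : Bicyclic k) q.2 := by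
  rw [BicyclicNat.mul_def, Bruck.mk_mul_mk]
  rcases lt_trichotomy p.2 q.1 with h | h | h
  · erw [if_pos h.le, if_pos h]
  · erw [if_pos h.le, if_neg (show ¬ p.2 < q.1 by omega), if_neg (show ¬ q.1 < p.2 by omega), Bicyclic.one_mul'_s7]
    have h1 : p.1 + q.1 - p.2 = p.1 := by omega
    rw [h1]
  · erw [if_neg (show ¬ p.2 ≤ q.1 by omega), if_neg (show ¬ p.2 < q.1 by omega), if_pos h]


/-- In any locally compact Hausdorff shift-continuous topology on
`B⁰(B_k)`, the set `B = {(n,(0,0),m) : n, m ∈ ω} ∪ {0*}` is a closed subsemigroup,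
isomorphic as a semigroup to the bicyclic monoid with adjoined zero, with `0*`
corresponding to the zero. -/
theorem closed_copy_of_bicyclic_with_zero (k : ℕ)
    [TopologicalSpace (BruckZero (Bicyclic k))] [T2Space (BruckZero (Bicyclic k))]
    [LocallyCompactSpace (BruckZero (Bicyclic k))]
    (hτ : ShiftContinuous (BruckZero (Bicyclic k))) :
    IsClosed {x : BruckZero (Bicyclic k) |
        x = 0 ∨ ∃ n m : ℕ, x = ↑(Bruck.mk n (1 : Bicyclic k) m)} ∧
    (∀ x ∈ {x : BruckZero (Bicyclic k) |
        x = 0 ∨ ∃ n m : ℕ, x = ↑(Bruck.mk n (1 : Bicyclic k) m)},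
      ∀ y ∈ {x : BruckZero (Bicyclic k) |
        x = 0 ∨ ∃ n m : ℕ, x = ↑(Bruck.mk n (1 : Bicyclic k) m)},
      x * y ∈ {x : BruckZero (Bicyclic k) |
        x = 0 ∨ ∃ n m : ℕ, x = ↑(Bruck.mk n (1 : Bicyclic k) m)}) ∧
    ∃ f : WithZero BicyclicNat → BruckZero (Bicyclic k),
      Function.Injective f ∧
      Set.range f = {x : BruckZero (Bicyclic k) |
        x = 0 ∨ ∃ n m : ℕ, x = ↑(Bruck.mk n (1 : Bicyclic k) m)} ∧
      (∀ x y : WithZero BicyclicNat, f (x * y) = f x * f y) ∧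
      f 0 = 0 := by
  classical
  refine ⟨?_, ?_, ?_⟩
  · -- closedness
    apply isClosed_of_closure_subset
    intro w hw
    by_contra hws
    simp only [Set.mem_setOf_eq] at hws
    push_neg at hws
    obtain ⟨hw0, hwB⟩ := hws
    obtain ⟨v, rfl⟩ := WithZero.ne_zero_iff_exists.mp hw0
    obtain ⟨c, t, d⟩ := v
    have htne : t ≠ 1 := by
      intro h
      exact hwB c d (by rw [h]; rfl)
    have hωk : 1 < ω ^ (k : Ordinal) := by
      by_contra hle
      push_neg at hle
      have h1 : t.val.1 = 0 := Ordinal.lt_one_iff_zero.mp (lt_of_lt_of_le t.2.1 hle)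
      have h2 : t.val.2 = 0 := Ordinal.lt_one_iff_zero.mp (lt_of_lt_of_le t.2.2 hle)
      exact htne (Subtype.ext (Prod.ext h1 h2))
    have hb1 : t.val.2 + 1 < ω ^ (k : Ordinal) :=
      (principal_add_omega0_opow (k : Ordinal)) t.2.2 hωk
    set s' : Bicyclic (k : Ordinal) := ⟨(t.val.2 + 1, t.val.2 + 1), hb1, hb1⟩ with hs'
    have hts' : t * s' ≠ t := by
      intro h
      have hval := congrArg Subtype.val h
      rw [Bicyclic.val_mul, if_pos (by exact le_self_add)] at hval
      have h2 := congrArg Prod.snd hval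
      simp only [hs'] at h2
      have hlt : t.val.2 < t.val.2 + 1 := by
        rw [Ordinal.add_one_eq_succ]; exact Order.lt_succ _
      exact absurd h2 hlt.ne'
    set e : Bruck (Bicyclic k) := Bruck.mk 0 1 0 with he
    set b₁ : Bruck (Bicyclic k) := Bruck.mk d s' d with hb₁def
    set g₁ : BruckZero (Bicyclic k) → BruckZero (Bicyclic k) :=
      fun y => ↑e * y * ↑b₁ with hg₁def
    have hg₁ : Continuous g₁ := hτ _ _
    have hg₁w : g₁ ↑(Bruck.mk c t d) ≠ ↑(Bruck.mk c t d) := by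
      show (↑e : BruckZero (Bicyclic k)) * ↑(Bruck.mk c t d) * ↑b₁ ≠ ↑(Bruck.mk c t d)
      rw [← WithZero.coe_mul, ← WithZero.coe_mul, Bruck.one_mul'']
      have h2 : Bruck.mk c t d * b₁ = Bruck.mk c (t * s') d := by
        rw [hb₁def, Bruck.mk_mul_mk, if_neg (lt_irrefl d), if_neg (lt_irrefl d)]
      rw [h2]
      intro hcontra
      exact hts' (congrArg (fun z : Bruck (Bicyclic k) => z.2.1)
        (WithZero.coe_inj.mp hcontra))
    have hw1 := keyStep hg₁ hw hg₁w
    set row : ℕ → Set (BruckZero (Bicyclic k)) :=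
      fun m₀ => {x | ∃ n : ℕ, x = ↑(Bruck.mk n (1 : Bicyclic k) m₀)} with hrow
    have hsub1 : {y | y ∈ {x : BruckZero (Bicyclic k) |
          x = 0 ∨ ∃ n m : ℕ, x = ↑(Bruck.mk n (1 : Bicyclic k) m)} ∧ g₁ y ≠ y} ⊆
        ⋃ m₀ ∈ Set.Iic d, row m₀ := by
      rintro y ⟨hyS, hymoved⟩
      simp only [Set.mem_setOf_eq] at hyS
      rcases hyS with rfl | ⟨n, m, rfl⟩
      · exact absurd (by show ↑e * 0 * ↑b₁ = (0 : BruckZero (Bicyclic k)); simp) hymoved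
      by_cases hm : m ≤ d
      · exact Set.mem_biUnion hm ⟨n, rfl⟩
      · exfalso
        apply hymoved
        show (↑e : BruckZero (Bicyclic k)) * ↑(Bruck.mk n (1 : Bicyclic k) m) * ↑b₁ = ↑(Bruck.mk n (1 : Bicyclic k) m)
        rw [← WithZero.coe_mul, ← WithZero.coe_mul, Bruck.one_mul'']
        rw [hb₁def, Bruck.mk_mul_mk, if_neg (by omega), if_pos (by omega)]
        have h3 : d + m - d = m := by omega
        rw [h3]
    have hFclosed : IsClosed (⋃ m₀ ∈ Set.Iic d, closure (row m₀)) :=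
      (Set.finite_Iic d).isClosed_biUnion (fun _ _ => isClosed_closure)
    have hsub2 := hsub1.trans (Set.iUnion₂_mono fun _ _ => subset_closure)
    have hw2 := closure_minimal hsub2 hFclosed hw1
    rw [Set.mem_iUnion₂] at hw2
    obtain ⟨m₀, hm₀, hwrow⟩ := hw2
    set a₂ : Bruck (Bicyclic k) := Bruck.mk (c + 1) s' (c + 1) with ha₂def
    set g₂ : BruckZero (Bicyclic k) → BruckZero (Bicyclic k) :=
      fun y => ↑a₂ * y * ↑e with hg₂def
    have hg₂ : Continuous g₂ := hτ _ _
    have hg₂w : g₂ ↑(Bruck.mk c t d) ≠ ↑(Bruck.mk c t d) := by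
      show (↑a₂ : BruckZero (Bicyclic k)) * ↑(Bruck.mk c t d) * ↑e ≠ ↑(Bruck.mk c t d)
      rw [← WithZero.coe_mul, ← WithZero.coe_mul]
      have h1 : a₂ * Bruck.mk c t d = Bruck.mk (c + 1) s' (d + 1) := by
        rw [ha₂def, Bruck.mk_mul_mk, if_neg (by omega), if_pos (by omega)]
        have h4 : d + (c + 1) - c = d + 1 := by omega
        rw [h4]
      rw [h1, Bruck.mul_one'']
      intro hcontra
      have h5 := congrArg (fun z : Bruck (Bicyclic k) => z.1) (WithZero.coe_inj.mp hcontra)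
      simp only [Bruck.mk] at h5
      omega
    have hw3 := keyStep hg₂ hwrow hg₂w
    have hsub3 : {y | y ∈ row m₀ ∧ g₂ y ≠ y} ⊆
        (fun n => (↑(Bruck.mk n (1 : Bicyclic k) m₀) : BruckZero (Bicyclic k))) ''
          Set.Iic (c + 1) := by
      rintro y ⟨hyrow, hymoved⟩
      obtain ⟨n, rfl⟩ := hyrow
      by_cases hn : n ≤ c + 1
      · exact ⟨n, hn, rfl⟩
      · exfalso
        apply hymoved
        show (↑a₂ : BruckZero (Bicyclic k)) * ↑(Bruck.mk n (1 : Bicyclic k) m₀) * ↑e = ↑(Bruck.mk n (1 : Bicyclic k) m₀)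
        rw [← WithZero.coe_mul, ← WithZero.coe_mul]
        have h1 : a₂ * Bruck.mk n (1 : Bicyclic k) m₀ = Bruck.mk n (1 : Bicyclic k) m₀ := by
          rw [ha₂def, Bruck.mk_mul_mk, if_pos (by omega)]
          have h6 : c + 1 + n - (c + 1) = n := by omega
          rw [h6]
        rw [h1, Bruck.mul_one'']
    have hfin : ((fun n => (↑(Bruck.mk n (1 : Bicyclic k) m₀) :
        BruckZero (Bicyclic k))) '' Set.Iic (c + 1)).Finite :=
      (Set.finite_Iic _).image _
    have hw4 := closure_minimal hsub3 hfin.isClosed hw3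
    obtain ⟨n, -, hn⟩ := hw4
    exact hwB n m₀ hn.symm
  · -- subsemigroup
    rintro x hx y hy
    simp only [Set.mem_setOf_eq] at hx hy ⊢
    rcases hx with rfl | ⟨n, m, rfl⟩
    · left; exact zero_mul y
    rcases hy with rfl | ⟨c, d, rfl⟩
    · left; exact mul_zero _
    right
    rw [← WithZero.coe_mul, Bruck.mk_mul_mk]
    rcases lt_trichotomy m c with h | h | h
    · exact ⟨n + c - m, d, by rw [if_pos h]⟩
    · refine ⟨n, d, ?_⟩
      rw [if_neg (by omega), if_neg (by omega), Bicyclic.one_mul'_s7]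
    · refine ⟨n, d + m - c, ?_⟩
      rw [if_neg (by omega), if_pos h]
  · -- the isomorphism
    refine ⟨Option.map (fun p : BicyclicNat => Bruck.mk p.1 (1 : Bicyclic k) p.2),
      ?_, ?_, ?_, rfl⟩
    · refine Option.map_injective ?_
      intro p q h
      have h1 := congrArg (fun z : Bruck (Bicyclic k) => z.1) h
      have h2 := congrArg (fun z : Bruck (Bicyclic k) => z.2.2) h
      exact Prod.ext h1 h2
    · ext x
      simp only [Set.mem_range, Set.mem_setOf_eq]
      constructor
      · rintro ⟨y, rfl⟩
        rcases y with _ | p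
        · left; rfl
        · right; exact ⟨p.1, p.2, rfl⟩
      · rintro (rfl | ⟨n, m, rfl⟩)
        · exact ⟨none, rfl⟩
        · exact ⟨some (⟨n, m⟩ : BicyclicNat), rfl⟩
    · intro x y
      rcases x with _ | p
      · rfl
      rcases y with _ | q
      · rfl
      · show (↑(Bruck.mk (p * q).1 (1 : Bicyclic k) (p * q).2) : BruckZero (Bicyclic k)) = _
        rw [BicyclicNat.map_mul, WithZero.coe_mul]
        rfl
end
end

section
/- Let k be a non-negative integer and let τ be a locally compact Hausdorff shift-continuous topology on B⁰(B_k) in which the adjoined zero 0* is not isolated. Then for every open neighborhood U of 0* there exists a non-negative integer n_U such that for every integer n > n_U one has [0,n+1] ∩ U = {x · (0,(0,0),1) : x ∈ [0,n] ∩ U}. -/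
open Ordinal Set Topology

noncomputable section

namespace St10

open Filter Topology Set

variable {α : Ordinal}

/-! ### Algebraic lemmas -/

lemma Bicyclic.mul_val (x y : Bicyclic α) :
    (x * y).val =
      if x.val.2 ≤ y.val.1 then (x.val.1 + (y.val.1 - x.val.2), y.val.2)
      else (x.val.1, y.val.2 + (x.val.2 - y.val.1)) := by
  change (ite _ _ _ : Bicyclic α).val = _
  by_cases h : x.val.2 ≤ y.val.1 <;> simp [h]

lemma Bicyclic.bmul_one (s : Bicyclic α) : s * 1 = s := by
  apply Subtype.ext
  rw [Bicyclic.mul_val]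
  have h1 : (1 : Bicyclic α).val = ((0 : Ordinal), (0 : Ordinal)) := rfl
  rw [h1]
  split_ifs with h
  · have h2 : s.val.2 = 0 := le_antisymm h zero_le
    simp only [h2, Ordinal.sub_zero, add_zero]
    rw [← h2]
  · simp [Ordinal.sub_zero]

lemma Bicyclic.bone_mul (s : Bicyclic α) : 1 * s = s := by
  apply Subtype.ext
  rw [Bicyclic.mul_val]
  have h1 : (1 : Bicyclic α).val = ((0 : Ordinal), (0 : Ordinal)) := rfl
  rw [h1]
  simp [zero_le, Ordinal.sub_zero]

lemma Bruck.mul_def {S : Type*} [Mul S] (x y : Bruck S) :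
    x * y =
      if x.2.2 < y.1 then (x.1 + y.1 - x.2.2, y.2.1, y.2.2)
      else if y.1 < x.2.2 then (x.1, x.2.1, y.2.2 + x.2.2 - y.1)
      else (x.1, x.2.1 * y.2.1, y.2.2) := rfl

lemma Bruck.mk_def {S : Type*} (n : ℕ) (s : S) (m : ℕ) :
    Bruck.mk n s m = (n, s, m) := rfl

/-- right shift `f`: `(a,s,b) * (0,1,1) = (a,s,b+1)`. -/
lemma fval (a b : ℕ) (s : Bicyclic α) :
    Bruck.mk a s b * Bruck.mk 0 (1 : Bicyclic α) 1 = Bruck.mk a s (b + 1) := by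
  rw [Bruck.mul_def]; delta Bruck.mk; dsimp only; show @Eq (ℕ × Bicyclic α × ℕ) _ _
  rcases Nat.eq_zero_or_pos b with hb | hb
  · subst hb
    norm_num [Bicyclic.bmul_one]
  · rw [if_neg (by omega), if_pos (by omega)]
    exact congrArg _ (congrArg _ (by omega))

/-- right shift `g` on `b ≥ 1`: `(a,s,b) * (1,1,0) = (a,s,b-1)`. -/
lemma gval1 (a b : ℕ) (s : Bicyclic α) (hb : 1 ≤ b) :
    Bruck.mk a s b * Bruck.mk 1 (1 : Bicyclic α) 0 = Bruck.mk a s (b - 1) := by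
  rw [Bruck.mul_def]; delta Bruck.mk; dsimp only; show @Eq (ℕ × Bicyclic α × ℕ) _ _
  rcases eq_or_lt_of_le hb with hb1 | hb1
  · rw [if_neg (by omega), if_neg (by omega)]
    simp [Bicyclic.bmul_one, ← hb1]
  · rw [if_neg (by omega), if_pos (by omega)]
    exact congrArg _ (congrArg _ (by omega))

/-- right shift `g` on the bottom row: `(a,s,0) * (1,1,0) = (a+1,1,0)`. -/
lemma gval0 (a : ℕ) (s : Bicyclic α) :
    Bruck.mk a s 0 * Bruck.mk 1 (1 : Bicyclic α) 0 = Bruck.mk (a + 1) (1 : Bicyclic α) 0 := by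
  rw [Bruck.mul_def]; delta Bruck.mk; dsimp only; show @Eq (ℕ × Bicyclic α × ℕ) _ _
  rw [if_pos (by omega)]
  exact congrArg (· , (1 : Bicyclic α), 0) (by omega)

/-- left shift `f̂`: `(1,1,0) * (a,s,b) = (a+1,s,b)`. -/
lemma fhatval (a b : ℕ) (s : Bicyclic α) :
    Bruck.mk 1 (1 : Bicyclic α) 0 * Bruck.mk a s b = Bruck.mk (a + 1) s b := by
  rw [Bruck.mul_def]; delta Bruck.mk; dsimp only; show @Eq (ℕ × Bicyclic α × ℕ) _ _
  rcases Nat.eq_zero_or_pos a with ha | ha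
  · subst ha
    norm_num [Bicyclic.bone_mul]
  · rw [if_pos (by omega)]
    exact congrArg (· , s, b) (by omega)

/-- left shift `ĝ` for `a ≥ 1`: `(0,1,1) * (a,s,b) = (a-1,s,b)`. -/
lemma ghatval1 (a b : ℕ) (s : Bicyclic α) (ha : 1 ≤ a) :
    Bruck.mk 0 (1 : Bicyclic α) 1 * Bruck.mk a s b = Bruck.mk (a - 1) s b := by
  rw [Bruck.mul_def]; delta Bruck.mk; dsimp only; show @Eq (ℕ × Bicyclic α × ℕ) _ _
  rcases eq_or_lt_of_le ha with ha1 | ha1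
  · rw [if_neg (by omega), if_neg (by omega)]
    simp [Bicyclic.bone_mul, ← ha1]
  · rw [if_pos (by omega)]
    exact congrArg (· , s, b) (by omega)

/-- left shift `ĝ` on the first column: `(0,1,1) * (0,s,b) = (0,1,b+1)`. -/
lemma ghatval0 (b : ℕ) (s : Bicyclic α) :
    Bruck.mk 0 (1 : Bicyclic α) 1 * Bruck.mk 0 s b = Bruck.mk 0 (1 : Bicyclic α) (b + 1) := by
  rw [Bruck.mul_def]; delta Bruck.mk; dsimp only; show @Eq (ℕ × Bicyclic α × ℕ) _ _
  rw [if_neg (by omega), if_pos (by omega)]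
  exact congrArg _ (congrArg _ (by omega))

/-- left relabeling: `(0,u,0) * (0,s,b) = (0,u*s,b)`. -/
lemma phival (b : ℕ) (u s : Bicyclic α) :
    Bruck.mk 0 u 0 * Bruck.mk 0 s b = Bruck.mk 0 (u * s) b := by
  rw [Bruck.mul_def]; delta Bruck.mk; dsimp only; show @Eq (ℕ × Bicyclic α × ℕ) _ _
  norm_num

/-- the identity element of the Bruck extension. -/
lemma e_mul (x : Bruck (Bicyclic α)) : Bruck.mk 0 (1 : Bicyclic α) 0 * x = x := by
  rcases x with ⟨a, s, b⟩
  change Bruck.mk 0 (1 : Bicyclic α) 0 * Bruck.mk a s b = Bruck.mk a s b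
  rw [Bruck.mul_def]; delta Bruck.mk; dsimp only; show @Eq (ℕ × Bicyclic α × ℕ) _ _
  rcases Nat.eq_zero_or_pos a with ha | ha
  · subst ha
    norm_num [Bicyclic.bone_mul]
  · rw [if_pos (by omega)]
    exact congrArg (· , s, b) (by omega)

lemma mul_e (x : Bruck (Bicyclic α)) : x * Bruck.mk 0 (1 : Bicyclic α) 0 = x := by
  rcases x with ⟨a, s, b⟩
  change Bruck.mk a s b * Bruck.mk 0 (1 : Bicyclic α) 0 = Bruck.mk a s b
  rw [Bruck.mul_def]; delta Bruck.mk; dsimp only; show @Eq (ℕ × Bicyclic α × ℕ) _ _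
  rcases Nat.eq_zero_or_pos b with hb | hb
  · subst hb
    norm_num [Bicyclic.bmul_one]
  · rw [if_neg (by omega), if_pos (by omega)]
    exact congrArg _ (congrArg _ (by omega))

/-- collapse of the box `[a,b]`: `(0,1,a+1) * (a,t,b) * (b+1,1,0) = (0,1,0)`. -/
lemma thetaval (a b : ℕ) (t : Bicyclic α) :
    Bruck.mk 0 (1 : Bicyclic α) (a + 1) * Bruck.mk a t b * Bruck.mk (b + 1) (1 : Bicyclic α) 0
      = Bruck.mk 0 (1 : Bicyclic α) 0 := by
  have h1 : Bruck.mk 0 (1 : Bicyclic α) (a + 1) * Bruck.mk a t b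
      = Bruck.mk 0 (1 : Bicyclic α) (b + 1) := by
    rw [Bruck.mul_def]; delta Bruck.mk; dsimp only; show @Eq (ℕ × Bicyclic α × ℕ) _ _
    rw [if_neg (by omega), if_pos (by omega)]
    exact congrArg _ (congrArg _ (by omega))
  rw [h1]
  rw [Bruck.mul_def]; delta Bruck.mk; dsimp only; show @Eq (ℕ × Bicyclic α × ℕ) _ _
  rw [if_neg (by omega), if_neg (by omega)]
  simp [Bicyclic.bmul_one]

/-! ### Escape sets -/

def Da (α : Ordinal) (N : ℕ) : Set (BruckZero (Bicyclic α)) :=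
  {x | ∃ (a : ℕ) (s : Bicyclic α) (b : ℕ), N ≤ a ∧ x = ↑(Bruck.mk a s b)}

def Db (α : Ordinal) (N : ℕ) : Set (BruckZero (Bicyclic α)) :=
  {x | ∃ (a : ℕ) (s : Bicyclic α) (b : ℕ), N ≤ b ∧ x = ↑(Bruck.mk a s b)}

def DD (α : Ordinal) (N : ℕ) : Set (BruckZero (Bicyclic α)) := Da α N ∪ Db α N

lemma Da_anti {N M : ℕ} (h : N ≤ M) : Da α M ⊆ Da α N := by
  rintro x ⟨a, s, b, hab, rfl⟩
  exact ⟨a, s, b, le_trans h hab, rfl⟩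

lemma Db_anti {N M : ℕ} (h : N ≤ M) : Db α M ⊆ Db α N := by
  rintro x ⟨a, s, b, hab, rfl⟩
  exact ⟨a, s, b, le_trans h hab, rfl⟩

lemma DD_anti {N M : ℕ} (h : N ≤ M) : DD α M ⊆ DD α N :=
  Set.union_subset_union (Da_anti h) (Db_anti h)

/-! ### Continuity helpers -/

section Topo

variable [TopologicalSpace (BruckZero (Bicyclic α))]

lemma Xe_mul (x : BruckZero (Bicyclic α)) :
    (↑(Bruck.mk 0 (1 : Bicyclic α) 0) : BruckZero (Bicyclic α)) * x = x := by
  rcases eq_or_ne x 0 with rfl | hx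
  · exact mul_zero _
  · obtain ⟨y, rfl⟩ := WithZero.ne_zero_iff_exists.mp hx
    rw [← WithZero.coe_mul, e_mul]

lemma Xmul_e (x : BruckZero (Bicyclic α)) :
    x * (↑(Bruck.mk 0 (1 : Bicyclic α) 0) : BruckZero (Bicyclic α)) = x := by
  rcases eq_or_ne x 0 with rfl | hx
  · exact zero_mul _
  · obtain ⟨y, rfl⟩ := WithZero.ne_zero_iff_exists.mp hx
    rw [← WithZero.coe_mul, mul_e]

lemma cont_rmul (hτ : ShiftContinuous (BruckZero (Bicyclic α))) (q : Bruck (Bicyclic α)) :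
    Continuous fun x : BruckZero (Bicyclic α) => x * ↑q := by
  refine (hτ (↑(Bruck.mk 0 (1 : Bicyclic α) 0)) (↑q)).congr fun x => ?_
  rw [Xe_mul]

lemma cont_lmul (hτ : ShiftContinuous (BruckZero (Bicyclic α))) (p : Bruck (Bicyclic α)) :
    Continuous fun x : BruckZero (Bicyclic α) => ↑p * x := by
  refine (hτ (↑p) (↑(Bruck.mk 0 (1 : Bicyclic α) 0))).congr fun x => ?_
  rw [Xmul_e]

/-! ### The walk lemmas -/

lemma walkR [T2Space (BruckZero (Bicyclic α))]
    (hτ : ShiftContinuous (BruckZero (Bicyclic α)))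
    (𝒰 : Ultrafilter (BruckZero (Bicyclic α))) (A B : ℕ) (σ : Bicyclic α)
    (h𝒰p : (𝒰 : Filter (BruckZero (Bicyclic α))) ≤ 𝓝 (↑(Bruck.mk A σ B)))
    (hb : ∀ N, Db α N ∈ 𝒰) : False := by
  set g : BruckZero (Bicyclic α) → BruckZero (Bicyclic α) :=
    fun x => x * ↑(Bruck.mk 1 (1 : Bicyclic α) 0) with hg
  have hgc : Continuous g := cont_rmul hτ _
  set fm : BruckZero (Bicyclic α) → BruckZero (Bicyclic α) :=
    fun x => x * ↑(Bruck.mk 0 (1 : Bicyclic α) 1) with hfm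
  have hfc : Continuous fm := cont_rmul hτ _
  have gIter : ∀ j a b (s : Bicyclic α), j ≤ b →
      g^[j] ↑(Bruck.mk a s b) = ↑(Bruck.mk a s (b - j)) := by
    intro j
    induction j with
    | zero => intro a b s _; simp
    | succ j ih =>
      intro a b s hj
      rw [Function.iterate_succ_apply', ih a b s (by omega), hg]
      simp only
      rw [← WithZero.coe_mul, gval1 _ _ _ (by omega)]
      rw [show b - j - 1 = b - (j+1) from by omega]
  have hT1 : Tendsto (g^[B]) 𝒰 (𝓝 (g^[B] ↑(Bruck.mk A σ B))) :=
    ((hgc.iterate B).tendsto _).mono_left h𝒰p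
  have hT2 : Tendsto (fun x => fm (g^[B+1] x)) 𝒰 (𝓝 (fm (g^[B+1] ↑(Bruck.mk A σ B)))) :=
    ((hfc.comp (hgc.iterate (B+1))).tendsto _).mono_left h𝒰p
  have hEv : g^[B] =ᶠ[(𝒰 : Filter (BruckZero (Bicyclic α)))] fun x => fm (g^[B+1] x) := by
    filter_upwards [hb (B+2)] with x hx
    obtain ⟨a, s, b, hBb, rfl⟩ := hx
    rw [gIter B a b s (by omega), gIter (B+1) a b s (by omega), hfm]
    simp only
    rw [← WithZero.coe_mul, fval]
    rw [show b - B = b - (B+1) + 1 from by omega]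
  have key := tendsto_nhds_unique_of_eventuallyEq hT1 hT2 hEv
  have h2 : g^[B+1] (↑(Bruck.mk A σ B) : BruckZero (Bicyclic α))
      = ↑(Bruck.mk (A+1) (1 : Bicyclic α) 0) := by
    rw [Function.iterate_succ_apply', gIter B A B σ le_rfl, hg]
    simp only
    rw [show B - B = 0 from by omega, ← WithZero.coe_mul, gval0]
  rw [gIter B A B σ le_rfl, h2, hfm] at key
  simp only at key
  rw [← WithZero.coe_mul, fval] at key
  have h3 := WithZero.coe_inj.mp key
  have hA : A = A + 1 := congrArg (fun z : Bruck (Bicyclic α) => z.1) h3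
  omega

lemma walkL [T2Space (BruckZero (Bicyclic α))]
    (hτ : ShiftContinuous (BruckZero (Bicyclic α)))
    (𝒰 : Ultrafilter (BruckZero (Bicyclic α))) (A B : ℕ) (σ : Bicyclic α)
    (h𝒰p : (𝒰 : Filter (BruckZero (Bicyclic α))) ≤ 𝓝 (↑(Bruck.mk A σ B)))
    (ha : ∀ N, Da α N ∈ 𝒰) : False := by
  set g : BruckZero (Bicyclic α) → BruckZero (Bicyclic α) :=
    fun x => ↑(Bruck.mk 0 (1 : Bicyclic α) 1) * x with hg
  have hgc : Continuous g := cont_lmul hτ _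
  set fm : BruckZero (Bicyclic α) → BruckZero (Bicyclic α) :=
    fun x => ↑(Bruck.mk 1 (1 : Bicyclic α) 0) * x with hfm
  have hfc : Continuous fm := cont_lmul hτ _
  have gIter : ∀ j a b (s : Bicyclic α), j ≤ a →
      g^[j] ↑(Bruck.mk a s b) = ↑(Bruck.mk (a - j) s b) := by
    intro j
    induction j with
    | zero => intro a b s _; simp
    | succ j ih =>
      intro a b s hj
      rw [Function.iterate_succ_apply', ih a b s (by omega), hg]
      simp only
      rw [← WithZero.coe_mul, ghatval1 _ _ _ (by omega)]
      rw [show a - j - 1 = a - (j+1) from by omega]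
  have hT1 : Tendsto (g^[A]) 𝒰 (𝓝 (g^[A] ↑(Bruck.mk A σ B))) :=
    ((hgc.iterate A).tendsto _).mono_left h𝒰p
  have hT2 : Tendsto (fun x => fm (g^[A+1] x)) 𝒰 (𝓝 (fm (g^[A+1] ↑(Bruck.mk A σ B)))) :=
    ((hfc.comp (hgc.iterate (A+1))).tendsto _).mono_left h𝒰p
  have hEv : g^[A] =ᶠ[(𝒰 : Filter (BruckZero (Bicyclic α)))] fun x => fm (g^[A+1] x) := by
    filter_upwards [ha (A+2)] with x hx
    obtain ⟨a, s, b, hAa, rfl⟩ := hx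
    rw [gIter A a b s (by omega), gIter (A+1) a b s (by omega), hfm]
    simp only
    rw [← WithZero.coe_mul, fhatval]
    rw [show a - A = a - (A+1) + 1 from by omega]
  have key := tendsto_nhds_unique_of_eventuallyEq hT1 hT2 hEv
  have h2 : g^[A+1] (↑(Bruck.mk A σ B) : BruckZero (Bicyclic α))
      = ↑(Bruck.mk 0 (1 : Bicyclic α) (B + 1)) := by
    rw [Function.iterate_succ_apply', gIter A A B σ le_rfl, hg]
    simp only
    rw [show A - A = 0 from by omega, ← WithZero.coe_mul, ghatval0]
  rw [gIter A A B σ le_rfl, h2, hfm] at key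
  simp only at key
  rw [← WithZero.coe_mul, fhatval] at key
  have h3 := WithZero.coe_inj.mp key
  have hA : A - A = 0 + 1 := congrArg (fun z : Bruck (Bicyclic α) => z.1) h3
  omega

/-- Any point lying in the closure of all the escape sets is zero. -/
lemma lemW [T2Space (BruckZero (Bicyclic α))]
    (hτ : ShiftContinuous (BruckZero (Bicyclic α)))
    (p : BruckZero (Bicyclic α)) (hp : ∀ N, p ∈ closure (DD α N)) : p = 0 := by
  by_contra hp0
  obtain ⟨q, rfl⟩ : ∃ q : Bruck (Bicyclic α), p = ↑q := by
    obtain ⟨q, hq⟩ := WithZero.ne_zero_iff_exists.mp hp0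
    exact ⟨q, hq.symm⟩
  obtain ⟨A, σ, B⟩ := q
  have hmk : ((A, σ, B) : Bruck (Bicyclic α)) = Bruck.mk A σ B := rfl
  rw [hmk] at hp
  set F : Filter (BruckZero (Bicyclic α)) :=
    ⨅ N, (𝓝 (↑(Bruck.mk A σ B)) ⊓ 𝓟 (DD α N)) with hF
  have hFne : F.NeBot := by
    apply Filter.iInf_neBot_of_directed
    · intro N M
      refine ⟨max N M, ?_, ?_⟩
      · exact inf_le_inf le_rfl (principal_mono.mpr (DD_anti (le_max_left _ _)))
      · exact inf_le_inf le_rfl (principal_mono.mpr (DD_anti (le_max_right _ _)))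
    · intro N
      exact mem_closure_iff_clusterPt.mp (hp N)
  set 𝒰 := Ultrafilter.of F with h𝒰
  have h𝒰F : (𝒰 : Filter (BruckZero (Bicyclic α))) ≤ F := Ultrafilter.of_le F
  have h𝒰p : (𝒰 : Filter (BruckZero (Bicyclic α))) ≤ 𝓝 (↑(Bruck.mk A σ B)) :=
    h𝒰F.trans ((iInf_le _ 0).trans inf_le_left)
  have hDD : ∀ N, DD α N ∈ 𝒰 := fun N =>
    h𝒰F (mem_iInf_of_mem N (mem_inf_of_right (mem_principal_self _)))
  by_cases hball : ∀ N, Db α N ∈ 𝒰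
  · exact walkR hτ 𝒰 A B σ h𝒰p hball
  · push_neg at hball
    obtain ⟨N₀, hN₀⟩ := hball
    have haall : ∀ N, Da α N ∈ 𝒰 := by
      intro N
      have h1 : Da α (max N N₀) ∪ Db α (max N N₀) ∈ 𝒰 := hDD (max N N₀)
      have h2 : Db α (max N N₀) ∉ 𝒰 := fun h =>
        hN₀ (𝒰.toFilter.mem_of_superset h (Db_anti (le_max_right _ _)))
      have h3 : Da α (max N N₀) ∈ 𝒰 := (Ultrafilter.union_mem_iff.mp h1).resolve_right h2
      exact 𝒰.toFilter.mem_of_superset h3 (Da_anti (le_max_left _ _))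
    exact walkL hτ 𝒰 A B σ h𝒰p haall

/-- Threshold lemma: on a compact set `K`, a continuous shift `T` with `T 0 = 0`
maps all points of sufficiently high level into a given neighborhood `V` of `0`. -/
lemma lemC [T2Space (BruckZero (Bicyclic α))]
    (hτ : ShiftContinuous (BruckZero (Bicyclic α)))
    {K V : Set (BruckZero (Bicyclic α))} (hK : IsCompact K) (hV : IsOpen V)
    (h0V : (0 : BruckZero (Bicyclic α)) ∈ V)
    (T : BruckZero (Bicyclic α) → BruckZero (Bicyclic α))
    (hT : Continuous T) (hT0 : T 0 = 0) :
    ∃ L, ∀ x ∈ K, x ∈ DD α L → T x ∈ V := by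
  by_contra hcon
  push_neg at hcon
  set C : Set (BruckZero (Bicyclic α)) := K ∩ T ⁻¹' Vᶜ with hC
  have hCclosed : IsClosed C := hK.isClosed.inter ((hV.isClosed_compl).preimage hT)
  have hCc : IsCompact C := hK.inter_right ((hV.isClosed_compl).preimage hT)
  set W : ℕ → Set (BruckZero (Bicyclic α)) := fun n => C ∩ closure (DD α n) with hW
  have hWne : ∀ n, (W n).Nonempty := by
    intro n
    obtain ⟨x, hxK, hxD, hxV⟩ := hcon n
    exact ⟨x, ⟨hxK, hxV⟩, subset_closure hxD⟩
  have hWdec : ∀ n, W (n + 1) ⊆ W n := fun n =>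
    Set.inter_subset_inter le_rfl (closure_mono (DD_anti (Nat.le_succ n)))
  have hW0 : IsCompact (W 0) := hCc.inter_right isClosed_closure
  have hWcl : ∀ n, IsClosed (W n) := fun n => hCclosed.inter isClosed_closure
  obtain ⟨p, hp⟩ :=
    IsCompact.nonempty_iInter_of_sequence_nonempty_isCompact_isClosed W hWdec hWne hW0 hWcl
  simp only [Set.mem_iInter] at hp
  have hp0 : p = 0 := lemW hτ p fun N => (hp N).2
  have hpC : p ∈ C := (hp 0).1
  rw [hp0] at hpC
  exact hpC.2 (by simpa [hT0] using h0V)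

/-- Non-isolatedness of `0` produces nonzero points of arbitrarily high level
in every neighborhood of `0`. -/
lemma lemISO [T2Space (BruckZero (Bicyclic α))]
    (hτ : ShiftContinuous (BruckZero (Bicyclic α)))
    (h0 : ¬ IsOpen ({0} : Set (BruckZero (Bicyclic α))))
    {V : Set (BruckZero (Bicyclic α))} (hV : V ∈ 𝓝 (0 : BruckZero (Bicyclic α)))
    (N : ℕ) : ∃ x ∈ V, x ∈ DD α N := by
  have hcl : (0 : BruckZero (Bicyclic α)) ∈ closure ({0}ᶜ : Set (BruckZero (Bicyclic α))) := by
    by_contra hc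
    rw [mem_closure_iff] at hc
    push_neg at hc
    obtain ⟨O, hOopen, hO0, hOint⟩ := hc
    have hOsub : O ⊆ {0} := by
      intro x hx
      by_contra hx0
      exact (Set.eq_empty_iff_forall_notMem.mp hOint x) ⟨hx, hx0⟩
    have : O = ({0} : Set (BruckZero (Bicyclic α))) :=
      Set.eq_singleton_iff_unique_mem.mpr ⟨hO0, fun y hy => hOsub hy⟩
    exact h0 (this ▸ hOopen)
  have hne : (𝓝 (0 : BruckZero (Bicyclic α)) ⊓ 𝓟 ({0}ᶜ)).NeBot :=
    mem_closure_iff_clusterPt.mp hcl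
  set 𝒰 := Ultrafilter.of (𝓝 (0 : BruckZero (Bicyclic α)) ⊓ 𝓟 ({0}ᶜ)) with h𝒰
  have h𝒰le : (𝒰 : Filter (BruckZero (Bicyclic α))) ≤ 𝓝 (0 : BruckZero (Bicyclic α)) ⊓ 𝓟 ({0}ᶜ) :=
    Ultrafilter.of_le _
  have h𝒰0 : (𝒰 : Filter (BruckZero (Bicyclic α))) ≤ 𝓝 (0 : BruckZero (Bicyclic α)) :=
    h𝒰le.trans inf_le_left
  have hnz : ({0}ᶜ : Set (BruckZero (Bicyclic α))) ∈ 𝒰 :=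
    h𝒰le (mem_inf_of_right (mem_principal_self _))
  by_cases hDD : DD α N ∈ 𝒰
  · have hVmem : V ∈ 𝒰 := h𝒰0 hV
    obtain ⟨x, hx⟩ := 𝒰.nonempty_of_mem (Filter.inter_mem hVmem hDD)
    exact ⟨x, hx.1, hx.2⟩
  · exfalso
    have hcomp : (DD α N)ᶜ ∩ ({0}ᶜ) ∈ 𝒰 :=
      Filter.inter_mem ((𝒰.compl_mem_iff_notMem).mpr hDD) hnz
    have hsub : (DD α N)ᶜ ∩ ({0}ᶜ : Set (BruckZero (Bicyclic α)))
        ⊆ ⋃ p ∈ Finset.range N ×ˢ Finset.range N, box (Bicyclic α) p.1 p.2 := by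
      rintro x ⟨hxD, hx0⟩
      obtain ⟨q, rfl⟩ : ∃ q : Bruck (Bicyclic α), x = ↑q := by
        obtain ⟨q, hq⟩ := WithZero.ne_zero_iff_exists.mp hx0
        exact ⟨q, hq.symm⟩
      obtain ⟨a, s, b⟩ := q
      have hmk : ((a, s, b) : Bruck (Bicyclic α)) = Bruck.mk a s b := rfl
      have hna : a < N := by
        by_contra hge
        exact hxD (Or.inl ⟨a, s, b, by omega, by rw [hmk]⟩)
      have hnb : b < N := by
        by_contra hge
        exact hxD (Or.inr ⟨a, s, b, by omega, by rw [hmk]⟩)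
      simp only [Set.mem_iUnion, Finset.mem_product, Finset.mem_range]
      exact ⟨(a, b), ⟨hna, hnb⟩, s, by rw [hmk]⟩
    have hUnion : (⋃ p ∈ Finset.range N ×ˢ Finset.range N,
        box (Bicyclic α) p.1 p.2) ∈ 𝒰 := 𝒰.toFilter.mem_of_superset hcomp hsub
    obtain ⟨p, hpmem, hbox⟩ :=
      (Ultrafilter.finite_biUnion_mem_iff (Finset.range N ×ˢ Finset.range N).finite_toSet).mp
        hUnion
    obtain ⟨a, b⟩ := p
    set Θ : BruckZero (Bicyclic α) → BruckZero (Bicyclic α) :=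
      fun x => ↑(Bruck.mk 0 (1 : Bicyclic α) (a + 1)) * x * ↑(Bruck.mk (b + 1) (1 : Bicyclic α) 0)
      with hΘ
    have hΘc : Continuous Θ := hτ _ _
    have hΘ0 : Θ 0 = 0 := by rw [hΘ]; simp
    have hT1 : Tendsto Θ 𝒰 (𝓝 (0 : BruckZero (Bicyclic α))) := by
      have := (hΘc.tendsto (0 : BruckZero (Bicyclic α))).mono_left h𝒰0
      rwa [hΘ0] at this
    have hEv : Θ =ᶠ[(𝒰 : Filter (BruckZero (Bicyclic α)))]
        fun _ => ↑(Bruck.mk 0 (1 : Bicyclic α) 0) := by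
      filter_upwards [hbox] with x hx
      obtain ⟨t, rfl⟩ := hx
      rw [hΘ]
      simp only
      rw [← WithZero.coe_mul, ← WithZero.coe_mul, thetaval]
    have key := tendsto_nhds_unique_of_eventuallyEq hT1 tendsto_const_nhds hEv
    exact WithZero.zero_ne_coe key

/-- MAIN: every open neighborhood of `0` eventually contains the whole boxes `[0,b]`. -/
lemma main [T2Space (BruckZero (Bicyclic α))] [LocallyCompactSpace (BruckZero (Bicyclic α))]
    (hτ : ShiftContinuous (BruckZero (Bicyclic α)))
    (h0 : ¬ IsOpen ({0} : Set (BruckZero (Bicyclic α))))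
    {U : Set (BruckZero (Bicyclic α))} (hU : IsOpen U)
    (h0U : (0 : BruckZero (Bicyclic α)) ∈ U) :
    ∃ N, 1 ≤ N ∧ ∀ b, N ≤ b → ∀ s : Bicyclic α,
      (↑(Bruck.mk 0 s b) : BruckZero (Bicyclic α)) ∈ U := by
  obtain ⟨K, hKc, h0K, hKU⟩ := exists_compact_subset hU h0U
  set V := interior K with hV
  have hVopen : IsOpen V := isOpen_interior
  have h0V : (0 : BruckZero (Bicyclic α)) ∈ V := h0K
  have hVK : V ⊆ K := interior_subset
  obtain ⟨Lf, hLf⟩ := lemC hτ hKc hVopen h0V _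
    (cont_rmul hτ (Bruck.mk 0 (1 : Bicyclic α) 1)) (zero_mul _)
  obtain ⟨Lg, hLg⟩ := lemC hτ hKc hVopen h0V _
    (cont_rmul hτ (Bruck.mk 1 (1 : Bicyclic α) 0)) (zero_mul _)
  obtain ⟨Lh, hLh⟩ := lemC hτ hKc hVopen h0V _
    (cont_lmul hτ (Bruck.mk 0 (1 : Bicyclic α) 1)) (mul_zero _)
  set N := max (max Lf Lg) (max Lh 1) with hN
  have hLfN : Lf ≤ N := le_trans (le_max_left _ _) (le_max_left _ _)
  have hLgN : Lg ≤ N := le_trans (le_max_right _ _) (le_max_left _ _)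
  have hLhN : Lh ≤ N := le_trans (le_max_left _ _) (le_max_right _ _)
  have h1N : 1 ≤ N := le_trans (le_max_right _ _) (le_max_right _ _)
  have memDa : ∀ (L a : ℕ) (s : Bicyclic α) (b : ℕ), L ≤ a →
      (↑(Bruck.mk a s b) : BruckZero (Bicyclic α)) ∈ DD α L :=
    fun L a s b h => Or.inl ⟨a, s, b, h, rfl⟩
  have memDb : ∀ (L a : ℕ) (s : Bicyclic α) (b : ℕ), L ≤ b →
      (↑(Bruck.mk a s b) : BruckZero (Bicyclic α)) ∈ DD α L :=
    fun L a s b h => Or.inr ⟨a, s, b, h, rfl⟩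
  obtain ⟨x₀, hx₀V, hx₀D⟩ := lemISO hτ h0 (hVopen.mem_nhds h0V) N
  obtain ⟨a₀, s₀, b₀, hab₀, rfl⟩ : ∃ (a : ℕ) (s : Bicyclic α) (b : ℕ),
      (N ≤ a ∨ N ≤ b) ∧ x₀ = ↑(Bruck.mk a s b) := by
    rcases hx₀D with ⟨a, s, b, h1, rfl⟩ | ⟨a, s, b, h1, rfl⟩
    · exact ⟨a, s, b, Or.inl h1, rfl⟩
    · exact ⟨a, s, b, Or.inr h1, rfl⟩
  have climb : ∀ (a b : ℕ) (s : Bicyclic α),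
      (↑(Bruck.mk a s b) : BruckZero (Bicyclic α)) ∈ V → (N ≤ a ∨ N ≤ b) →
      ∀ i, (↑(Bruck.mk a s (b + i)) : BruckZero (Bicyclic α)) ∈ V := by
    intro a b s hmem hab i
    induction i with
    | zero => exact hmem
    | succ i ih =>
      have hD : (↑(Bruck.mk a s (b + i)) : BruckZero (Bicyclic α)) ∈ DD α Lf := by
        rcases hab with h | h
        · exact memDa Lf a s (b + i) (by omega)
        · exact memDb Lf a s (b + i) (by omega)
      have h2 := hLf _ (hVK ih) hD
      rwa [← WithZero.coe_mul, fval] at h2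
  set b₁ := b₀ + (a₀ + N + 1) with hb₁
  have hb₁N : N ≤ b₁ := by omega
  have hx₁ : (↑(Bruck.mk a₀ s₀ b₁) : BruckZero (Bicyclic α)) ∈ V :=
    climb a₀ b₀ s₀ hx₀V hab₀ (a₀ + N + 1)
  have desc : ∀ j, j ≤ a₀ → (↑(Bruck.mk (a₀ - j) s₀ b₁) : BruckZero (Bicyclic α)) ∈ V := by
    intro j
    induction j with
    | zero => intro _; simpa using hx₁
    | succ j ih =>
      intro hj
      have ihv := ih (by omega)
      have hD : (↑(Bruck.mk (a₀ - j) s₀ b₁) : BruckZero (Bicyclic α)) ∈ DD α Lh :=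
        memDb Lh (a₀ - j) s₀ b₁ (by omega)
      have h2 := hLh _ (hVK ihv) hD
      rwa [← WithZero.coe_mul, ghatval1 _ _ _ (by omega),
        show a₀ - j - 1 = a₀ - (j + 1) from by omega] at h2
  have hcol : (↑(Bruck.mk 0 s₀ b₁) : BruckZero (Bicyclic α)) ∈ V := by
    have := desc a₀ le_rfl
    rwa [Nat.sub_self] at this
  have hxi1 : (↑(Bruck.mk 0 (1 : Bicyclic α) (b₁ + 1)) : BruckZero (Bicyclic α)) ∈ V := by
    have hD : (↑(Bruck.mk 0 s₀ b₁) : BruckZero (Bicyclic α)) ∈ DD α Lh :=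
      memDb Lh 0 s₀ b₁ (by omega)
    have h2 := hLh _ (hVK hcol) hD
    rwa [← WithZero.coe_mul, ghatval0] at h2
  have hxiUp : ∀ i, (↑(Bruck.mk 0 (1 : Bicyclic α) (b₁ + 1 + i)) : BruckZero (Bicyclic α)) ∈ V :=
    climb 0 (b₁ + 1) 1 hxi1 (Or.inr (by omega))
  have descg : ∀ (s : Bicyclic α) (M : ℕ),
      (↑(Bruck.mk 0 s M) : BruckZero (Bicyclic α)) ∈ V →
      ∀ j, N ≤ M - j → (↑(Bruck.mk 0 s (M - j)) : BruckZero (Bicyclic α)) ∈ V := by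
    intro s M hmem j
    induction j with
    | zero => intro _; simpa using hmem
    | succ j ih =>
      intro hj
      have ihv := ih (by omega)
      have hD : (↑(Bruck.mk 0 s (M - j)) : BruckZero (Bicyclic α)) ∈ DD α Lg :=
        memDb Lg 0 s (M - j) (by omega)
      have h2 := hLg _ (hVK ihv) hD
      rwa [← WithZero.coe_mul, gval1 _ _ _ (by omega),
        show M - j - 1 = M - (j + 1) from by omega] at h2
  have hxiAll : ∀ b, N ≤ b → (↑(Bruck.mk 0 (1 : Bicyclic α) b) : BruckZero (Bicyclic α)) ∈ V := by
    intro b hb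
    rcases le_or_gt b (b₁ + 1) with h | h
    · have := descg 1 (b₁ + 1) hxi1 (b₁ + 1 - b) (by omega)
      rwa [show b₁ + 1 - (b₁ + 1 - b) = b from by omega] at this
    · have := hxiUp (b - (b₁ + 1))
      rwa [show b₁ + 1 + (b - (b₁ + 1)) = b from by omega] at this
  refine ⟨N, h1N, fun b hb s => ?_⟩
  obtain ⟨Ls, hLs⟩ := lemC hτ hKc hVopen h0V _ (cont_lmul hτ (Bruck.mk 0 s 0)) (mul_zero _)
  have high : ∀ b', max N Ls ≤ b' →
      (↑(Bruck.mk 0 s b') : BruckZero (Bicyclic α)) ∈ V := by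
    intro b' hb'
    have hxi := hxiAll b' (le_trans (le_max_left _ _) hb')
    have hD : (↑(Bruck.mk 0 (1 : Bicyclic α) b') : BruckZero (Bicyclic α)) ∈ DD α Ls :=
      memDb Ls 0 1 b' (le_trans (le_max_right _ _) hb')
    have h2 := hLs _ (hVK hxi) hD
    rwa [← WithZero.coe_mul, phival, Bicyclic.bmul_one] at h2
  have hVb : (↑(Bruck.mk 0 s b) : BruckZero (Bicyclic α)) ∈ V := by
    rcases le_or_gt (max N Ls) b with h | h
    · exact high b h
    · have hNM : N ≤ max N Ls := le_max_left _ _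
      have hM : (↑(Bruck.mk 0 s (max N Ls)) : BruckZero (Bicyclic α)) ∈ V := high _ le_rfl
      have := descg s (max N Ls) hM (max N Ls - b) (by omega)
      rwa [show max N Ls - (max N Ls - b) = b from by omega] at this
  exact hKU (hVK hVb)

end Topo

end St10

/-- For a locally compact Hausdorff shift-continuous topology on
`B⁰(B_k)` with non-isolated zero, for every open neighborhood `U` of `0*` there is
`n_U ∈ ω` such that for all `n > n_U`,
`[0,n+1] ∩ U = ([0,n] ∩ U) · (0,(0,0),1)`. -/
theorem box_intersections_shift (k : ℕ)
    [TopologicalSpace (BruckZero (Bicyclic k))] [T2Space (BruckZero (Bicyclic k))]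
    [LocallyCompactSpace (BruckZero (Bicyclic k))]
    (hτ : ShiftContinuous (BruckZero (Bicyclic k)))
    (h0 : ¬ IsOpen ({0} : Set (BruckZero (Bicyclic k))))
    (U : Set (BruckZero (Bicyclic k)))
    (hU : IsOpen U) (h0U : (0 : BruckZero (Bicyclic k)) ∈ U) :
    ∃ nU : ℕ, ∀ n : ℕ, nU < n →
      box (Bicyclic k) 0 (n + 1) ∩ U =
        (fun x : BruckZero (Bicyclic k) =>
          x * ↑(Bruck.mk 0 (1 : Bicyclic k) 1)) '' (box (Bicyclic k) 0 n ∩ U) := by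
  obtain ⟨N, hN1, hN⟩ := St10.main hτ h0 hU h0U
  refine ⟨N, fun n hn => ?_⟩
  ext x
  constructor
  · rintro ⟨⟨s, rfl⟩, hxU⟩
    refine ⟨↑(Bruck.mk 0 s n), ⟨⟨s, rfl⟩, hN n (by omega) s⟩, ?_⟩
    show (↑(Bruck.mk 0 s n) * ↑(Bruck.mk 0 (1 : Bicyclic k) 1) : BruckZero (Bicyclic k)) = _
    rw [← WithZero.coe_mul, St10.fval]
  · rintro ⟨y, ⟨⟨s, rfl⟩, hyU⟩, rfl⟩
    have hval : (↑(Bruck.mk 0 s n) * ↑(Bruck.mk 0 (1 : Bicyclic k) 1) : BruckZero (Bicyclic k))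
        = ↑(Bruck.mk 0 s (n + 1)) := by
      rw [← WithZero.coe_mul, St10.fval]
    constructor
    · exact ⟨s, hval⟩
    · show (↑(Bruck.mk 0 s n) * ↑(Bruck.mk 0 (1 : Bicyclic k) 1) : BruckZero (Bicyclic k)) ∈ U
      rw [hval]
      exact hN (n + 1) (by omega) s
end
end
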